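/- arXiv:2506.08273 — 3 statements merged into one kernel-verified Lean document; each statement's English description precedes it below -/
import Mathlib

section
/- Let 0 < d < p. Then there exists a constant c = c(d, p) < ∞ such that for every function u : ℤ^d → ℂ with u(0) = 0, one has ∑_{j ∈ ℤ^d \ {0}} |u(j)|^p / ‖j‖_∞^p ≤ c · ∑_{j ∈ ℤ^d \ {0}} ∑_{k ∈ ℤ^d, k ∼ j} |u(j) − u(k)|^p. -/
open scoped ENNReal

/-- The sup-norm `‖x‖_∞` of a point of `ℤ^d`, as a real number. -/
noncomputable def zsup {d : ℕ} (x : Fin d → ℤ) : ℝ :=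
  ((Finset.univ.sup fun i => (x i).natAbs : ℕ) : ℝ)

/-- `x ∼ y`: the Euclidean distance between `x` and `y` equals `1`. -/
def nbrZ {d : ℕ} (x y : Fin d → ℤ) : Prop := ∑ i, (x i - y i) ^ 2 = 1

namespace HardyZ

/-- integer halving toward zero -/
def half (t : ℤ) : ℤ := t.sign * ((t.natAbs / 2 : ℕ) : ℤ)

lemma half_natAbs (t : ℤ) : (half t).natAbs = t.natAbs / 2 := by
  rcases eq_or_ne t 0 with rfl | ht
  · simp [half]
  · rw [half, Int.natAbs_mul, Int.natAbs_sign_of_ne_zero ht, one_mul, Int.natAbs_natCast]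

lemma half_zero : half 0 = 0 := by simp [half]

lemma natAbs_sub_two_half (t : ℤ) : (t - 2 * half t).natAbs ≤ 1 := by
  rcases eq_or_ne t 0 with rfl | ht
  · simp [half]
  · have h1 : t.sign * t.natAbs = t := Int.sign_mul_natAbs t
    have h2 : t - 2 * half t = t.sign * ((t.natAbs : ℤ) - 2 * ((t.natAbs / 2 : ℕ) : ℤ)) := by
      rw [half]; nth_rewrite 1 [← h1]; ring
    rw [h2, Int.natAbs_mul, Int.natAbs_sign_of_ne_zero ht, one_mul]
    have : ((t.natAbs : ℤ) - 2 * ((t.natAbs / 2 : ℕ) : ℤ)) = ((t.natAbs % 2 : ℕ) : ℤ) := by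
      push_cast; omega
    rw [this, Int.natAbs_natCast]; omega

/-- number of steps in a block for one coordinate -/
def sfn (t : ℤ) : ℕ := t.natAbs - t.natAbs / 2

lemma sfn_zero : sfn 0 = 0 := by simp [sfn]

lemma sfn_pos_ne {t : ℤ} {s : ℕ} (h : s < sfn t) : t ≠ 0 := by
  intro h0; rw [h0] at h; simp [sfn] at h

variable {d : ℕ}

def nsup (x : Fin d → ℤ) : ℕ := Finset.univ.sup fun i => (x i).natAbs

lemma zsup_eq (x : Fin d → ℤ) : zsup x = (nsup x : ℝ) := rfl

lemma natAbs_le_nsup (x : Fin d → ℤ) (l : Fin d) : (x l).natAbs ≤ nsup x :=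
  Finset.le_sup (f := fun i => (x i).natAbs) (Finset.mem_univ l)

lemma nsup_le {x : Fin d → ℤ} {n : ℕ} (h : ∀ l, (x l).natAbs ≤ n) : nsup x ≤ n :=
  Finset.sup_le fun l _ => h l

lemma nsup_eq_zero_iff {x : Fin d → ℤ} : nsup x = 0 ↔ x = 0 := by
  constructor
  · intro h; funext l
    have := natAbs_le_nsup x l
    rw [h] at this; simpa [Int.natAbs_eq_zero] using Nat.le_zero.1 this
  · intro h; subst h; apply Nat.le_zero.1; apply nsup_le; intro l; simp [Pi.zero_apply]

def H (x : Fin d → ℤ) : Fin d → ℤ := fun l => half (x l)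

lemma nsup_H_le (x : Fin d → ℤ) : nsup (H x) ≤ nsup x / 2 := by
  apply nsup_le; intro l
  rw [H, half_natAbs]
  exact Nat.div_le_div_right (natAbs_le_nsup x l)

lemma nsup_le_two_H (x : Fin d → ℤ) : nsup x ≤ 2 * nsup (H x) + 1 := by
  apply nsup_le; intro l
  have h1 : (x l).natAbs ≤ 2 * ((x l).natAbs / 2) + 1 := by omega
  have h2 : (H x l).natAbs = (x l).natAbs / 2 := half_natAbs _
  have := natAbs_le_nsup (H x) l
  omega

lemma two_nsup_H_le (x : Fin d → ℤ) : 2 * nsup (H x) ≤ nsup x := by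
  have := nsup_H_le x; omega

lemma nsup_iter_le (x : Fin d → ℤ) (k : ℕ) : nsup (H^[k] x) ≤ nsup x / 2 ^ k := by
  induction k with
  | zero => simp
  | succ k ih =>
    rw [Function.iterate_succ_apply']
    calc nsup (H (H^[k] x)) ≤ nsup (H^[k] x) / 2 := nsup_H_le _
    _ ≤ nsup x / 2 ^ k / 2 := Nat.div_le_div_right ih
    _ = nsup x / 2 ^ (k + 1) := by rw [Nat.div_div_eq_div_mul]; ring_nf

lemma pow_mul_nsup_iter_le (x : Fin d → ℤ) (k : ℕ) : 2 ^ k * nsup (H^[k] x) ≤ nsup x := by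
  induction k with
  | zero => simp
  | succ k ih =>
    rw [Function.iterate_succ_apply']
    have := two_nsup_H_le (H^[k] x)
    calc 2 ^ (k+1) * nsup (H (H^[k] x)) = 2 ^ k * (2 * nsup (H (H^[k] x))) := by ring
    _ ≤ 2 ^ k * nsup (H^[k] x) := Nat.mul_le_mul_left _ this
    _ ≤ nsup x := ih

lemma H_iter_eq_zero {x : Fin d → ℤ} {k : ℕ} (h : nsup x < 2 ^ k) : H^[k] x = 0 := by
  rw [← nsup_eq_zero_iff]
  have := nsup_iter_le x k
  have : nsup x / 2 ^ k = 0 := Nat.div_eq_of_lt h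
  omega

lemma natAbs_sub_pow_iter (x : Fin d → ℤ) (k : ℕ) (l : Fin d) :
    (x l - 2 ^ k * (H^[k] x) l).natAbs ≤ 2 ^ k - 1 := by
  induction k generalizing x with
  | zero => simp
  | succ k ih =>
    rw [Function.iterate_succ_apply]
    have h1 : (x l - 2 * (H x) l).natAbs ≤ 1 := natAbs_sub_two_half (x l)
    have h2 : ((H x) l - 2 ^ k * (H^[k] (H x)) l).natAbs ≤ 2 ^ k - 1 := ih (H x)
    have key : x l - 2 ^ (k+1) * (H^[k] (H x)) l
        = (x l - 2 * (H x) l) + 2 * ((H x) l - 2 ^ k * (H^[k] (H x)) l) := by ring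
    rw [key]
    calc ((x l - 2 * (H x) l) + 2 * ((H x) l - 2 ^ k * (H^[k] (H x)) l)).natAbs
        ≤ (x l - 2 * (H x) l).natAbs + (2 * ((H x) l - 2 ^ k * (H^[k] (H x)) l)).natAbs :=
          Int.natAbs_add_le _ _
    _ = (x l - 2 * (H x) l).natAbs + 2 * ((H x) l - 2 ^ k * (H^[k] (H x)) l).natAbs := by
          rw [Int.natAbs_mul]; rfl
    _ ≤ 1 + 2 * (2 ^ k - 1) := by omega
    _ ≤ 2 ^ (k+1) - 1 := by have : 1 ≤ 2 ^ k := Nat.one_le_two_pow; omega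

end HardyZ
namespace HardyZ
variable {d : ℕ}

/-- Point on the block path from `H y` to `y`: phase `i`, step `t`. -/
def E (y : Fin d → ℤ) (i : Fin d) (t : ℕ) : Fin d → ℤ :=
  fun l => if l < i then y l else if l = i then half (y i) + (y i).sign * (t : ℤ) else half (y l)

/-- hybrid point : first `n` coordinates of `y`, rest halved -/
def V (y : Fin d → ℤ) (n : ℕ) : Fin d → ℤ :=
  fun l => if (l : ℕ) < n then y l else half (y l)

lemma E_zero (y : Fin d → ℤ) (i : Fin d) : E y i 0 = V y i := by
  funext l
  simp only [E, V]
  rcases lt_trichotomy l i with h | h | h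
  · rw [if_pos h, if_pos (by exact_mod_cast h)]
  · subst h; simp
  · rw [if_neg (not_lt.2 h.le), if_neg (ne_of_gt h), if_neg (by exact_mod_cast not_lt.2 h.le)]

lemma E_top (y : Fin d → ℤ) (i : Fin d) : E y i (sfn (y i)) = V y ((i : ℕ) + 1) := by
  funext l
  simp only [E, V]
  rcases lt_trichotomy l i with h | h | h
  · have h' : (l : ℕ) < (i : ℕ) + 1 := by have := Fin.lt_def.mp h; omega
    rw [if_pos h, if_pos h']
  · subst h
    rw [if_neg (lt_irrefl l), if_pos rfl, if_pos (by omega)]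
    rcases eq_or_ne (y l) 0 with h0 | h0
    · simp [h0, half_zero, sfn_zero]
    · have h1 : half (y l) + (y l).sign * ((sfn (y l) : ℕ) : ℤ)
          = (y l).sign * (((y l).natAbs / 2 : ℕ) + ((sfn (y l) : ℕ) : ℤ)) := by
        rw [half]; ring
      rw [h1]
      have h2 : (((y l).natAbs / 2 : ℕ) : ℤ) + ((sfn (y l) : ℕ) : ℤ) = ((y l).natAbs : ℤ) := by
        have : (y l).natAbs / 2 + sfn (y l) = (y l).natAbs := by rw [sfn]; omega
        exact_mod_cast congrArg (Nat.cast : ℕ → ℤ) this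
      rw [h2, Int.sign_mul_natAbs]
  · have hl : ¬ (l : ℕ) < (i : ℕ) + 1 := by
      have : (i : ℕ) < (l : ℕ) := h
      omega
    rw [if_neg (not_lt.2 h.le), if_neg (ne_of_gt h), if_neg hl]

lemma V_zero (y : Fin d → ℤ) : V y 0 = H y := by
  funext l; simp [V, H]

lemma V_top (y : Fin d → ℤ) : V y d = y := by
  funext l; simp [V, l.isLt]

lemma E_succ_sub (y : Fin d → ℤ) (i : Fin d) (t : ℕ) (l : Fin d) :
    E y i (t + 1) l - E y i t l = if l = i then (y i).sign else 0 := by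
  simp only [E]
  rcases lt_trichotomy l i with h | h | h
  · rw [if_pos h, if_pos h, if_neg (ne_of_lt h)]; ring
  · subst h; simp only [lt_irrefl, if_neg, if_pos rfl, ite_false, ite_true]
    push_cast; ring
  · simp [E, not_lt.2 h.le, ne_of_gt h]

lemma sq_sign {t : ℤ} (ht : t ≠ 0) : t.sign ^ 2 = 1 := by
  rcases lt_trichotomy t 0 with h | h | h
  · rw [Int.sign_eq_neg_one_of_neg h]; ring
  · exact absurd h ht
  · rw [Int.sign_eq_one_of_pos h]; ring

lemma nbr_E {y : Fin d → ℤ} {i : Fin d} {t : ℕ} (ht : t < sfn (y i)) :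
    nbrZ (E y i (t + 1)) (E y i t) := by
  have hy : y i ≠ 0 := sfn_pos_ne ht
  unfold nbrZ
  have : ∀ l, (E y i (t+1) l - E y i t l) ^ 2 = if l = i then 1 else 0 := by
    intro l
    rw [E_succ_sub]
    rcases eq_or_ne l i with h | h
    · rw [if_pos h, if_pos h, sq_sign hy]
    · rw [if_neg h, if_neg h]; ring
  rw [Finset.sum_congr rfl (fun l _ => this l)]
  simp

lemma E_i_natAbs {y : Fin d → ℤ} {i : Fin d} (hy : y i ≠ 0) (t : ℕ) :
    (E y i t i).natAbs = (y i).natAbs / 2 + t := by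
  simp only [E, lt_irrefl, ite_false, ite_true, if_neg (lt_irrefl i), if_pos rfl]
  have h1 : half (y i) + (y i).sign * (t : ℤ)
      = (y i).sign * ((((y i).natAbs / 2 : ℕ) : ℤ) + (t : ℤ)) := by rw [half]; ring
  rw [h1, Int.natAbs_mul, Int.natAbs_sign_of_ne_zero hy, one_mul]
  have : (((y i).natAbs / 2 : ℕ) : ℤ) + (t : ℤ) = (((y i).natAbs / 2 + t : ℕ) : ℤ) := by push_cast; ring
  rw [this, Int.natAbs_natCast]

lemma natAbs_E_le {y : Fin d → ℤ} {i : Fin d} {t : ℕ} (ht : t ≤ sfn (y i)) (l : Fin d) :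
    (E y i t l).natAbs ≤ (y l).natAbs := by
  rcases lt_trichotomy l i with h | h | h
  · simp only [E, if_pos h]; omega
  · subst h
    rcases eq_or_ne (y l) 0 with h0 | h0
    · have ht0 : t = 0 := by rw [h0, sfn_zero] at ht; omega
      simp [E, ht0, h0, half_zero]
    · rw [E_i_natAbs h0 t]
      have hs : sfn (y l) = (y l).natAbs - (y l).natAbs / 2 := rfl
      omega
  · simp only [E, if_neg (not_lt.2 h.le), if_neg (ne_of_gt h), half_natAbs]
    omega

lemma half_natAbs_le_E {y : Fin d → ℤ} {i : Fin d} (t : ℕ) (l : Fin d) :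
    (half (y l)).natAbs ≤ (E y i t l).natAbs := by
  rcases lt_trichotomy l i with h | h | h
  · simp only [E, if_pos h, half_natAbs]; omega
  · subst h
    rcases eq_or_ne (y l) 0 with h0 | h0
    · simp [E, h0, half_zero]
    · rw [E_i_natAbs h0 t, half_natAbs]; omega
  · simp only [E, if_neg (not_lt.2 h.le), if_neg (ne_of_gt h)]; omega

lemma nsup_E_le {y : Fin d → ℤ} {i : Fin d} {t : ℕ} (ht : t ≤ sfn (y i)) :
    nsup (E y i t) ≤ nsup y :=
  nsup_le fun l => (natAbs_E_le ht l).trans (natAbs_le_nsup y l)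

lemma nsup_H_le_E (y : Fin d → ℤ) (i : Fin d) (t : ℕ) :
    nsup (H y) ≤ nsup (E y i t) :=
  nsup_le fun l => (half_natAbs_le_E t l).trans (natAbs_le_nsup _ l)

end HardyZ
namespace HardyZ
variable {d : ℕ}

lemma sum_ite_range {M : Type*} [AddCommMonoid M] (f : ℕ → M) {s N : ℕ} (h : s ≤ N) :
    ∑ t ∈ Finset.range N, (if t < s then f t else 0) = ∑ t ∈ Finset.range s, f t := by
  rw [← Finset.sum_subset (Finset.range_subset_range.mpr h)
      (fun x _ hx => by rw [if_neg (by simpa using hx)])]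
  exact Finset.sum_congr rfl fun x hx => if_pos (Finset.mem_range.mp hx)

lemma sfn_le_nsup_iter (j : Fin d → ℤ) (k : ℕ) (i : Fin d) :
    sfn ((H^[k] j) i) ≤ nsup j := by
  have h1 : sfn ((H^[k] j) i) ≤ ((H^[k] j) i).natAbs := by rw [sfn]; omega
  have h2 := natAbs_le_nsup (H^[k] j) i
  have h3 := nsup_iter_le j k
  have h4 : nsup j / 2 ^ k ≤ nsup j := Nat.div_le_self _ _
  omega

/-- Full telescoping of `u j` along the dyadic path. -/
lemma telescope (u : (Fin d → ℤ) → ℂ) (hu : u 0 = 0) (j : Fin d → ℤ) {K : ℕ}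
    (hK : nsup j < 2 ^ K) :
    u j = ∑ k ∈ Finset.range K, ∑ i : Fin d, ∑ t ∈ Finset.range (nsup j),
      (if t < sfn ((H^[k] j) i)
        then u (E (H^[k] j) i (t + 1)) - u (E (H^[k] j) i t) else 0) := by
  have block : ∀ y : Fin d → ℤ, nsup y ≤ nsup j →
      ∑ i : Fin d, ∑ t ∈ Finset.range (nsup j),
        (if t < sfn (y i) then u (E y i (t + 1)) - u (E y i t) else 0)
      = u y - u (H y) := by
    intro y hy
    have inner : ∀ i : Fin d,
        ∑ t ∈ Finset.range (nsup j),
          (if t < sfn (y i) then u (E y i (t + 1)) - u (E y i t) else 0)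
        = u (V y ((i : ℕ) + 1)) - u (V y (i : ℕ)) := by
      intro i
      have hs : sfn (y i) ≤ nsup j := by
        have h1 : sfn (y i) ≤ (y i).natAbs := by rw [sfn]; omega
        have h2 := natAbs_le_nsup y i
        omega
      rw [sum_ite_range _ hs, Finset.sum_range_sub (fun t => u (E y i t)), E_zero, E_top]
    rw [Finset.sum_congr rfl (fun i _ => inner i)]
    have := Finset.sum_range_sub (fun n => u (V y n)) d
    rw [Fin.sum_univ_eq_sum_range (fun n => u (V y (n + 1)) - u (V y n)) d] at *
    rw [this, V_zero, V_top]
  have blocks : ∀ y k, y = H^[k] j → True := fun _ _ _ => trivial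
  have main : ∑ k ∈ Finset.range K, ∑ i : Fin d, ∑ t ∈ Finset.range (nsup j),
      (if t < sfn ((H^[k] j) i)
        then u (E (H^[k] j) i (t + 1)) - u (E (H^[k] j) i t) else 0)
      = ∑ k ∈ Finset.range K, (u (H^[k] j) - u (H^[k+1] j)) := by
    apply Finset.sum_congr rfl
    intro k _
    have hnk : nsup (H^[k] j) ≤ nsup j :=
      le_trans (nsup_iter_le j k) (Nat.div_le_self _ _)
    rw [block (H^[k] j) hnk, Function.iterate_succ_apply']
  rw [main]
  have hsum : ∑ k ∈ Finset.range K, (u (H^[k] j) - u (H^[k+1] j))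
      = ∑ k ∈ Finset.range K, ((fun n => - u (H^[n] j)) (k+1) - (fun n => - u (H^[n] j)) k) :=
    Finset.sum_congr rfl fun k _ => by show _ = -u (H^[k+1] j) - -u (H^[k] j); ring
  rw [hsum, Finset.sum_range_sub (fun n => - u (H^[n] j)) K, H_iter_eq_zero hK]
  simp [hu]

end HardyZ
namespace HardyZ
variable {d : ℕ}

/-- weight scale for block `k` -/
def rho (j : Fin d → ℤ) (k : ℕ) : ℕ := nsup (H^[k+1] j) ⊔ 1

/-- `p`-th power of increment, as `ℝ≥0∞` -/
noncomputable def G (u : (Fin d → ℤ) → ℂ) (p : ℝ) (a b : Fin d → ℤ) : ℝ≥0∞ :=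
  ENNReal.ofReal (‖u a - u b‖ ^ p)

/-- summand of the edge-indexed master sum -/
noncomputable def Phi (u : (Fin d → ℤ) → ℂ) (p β : ℝ) (j : Fin d → ℤ)
    (z : ℕ × Fin d × ℕ) : ℝ≥0∞ :=
  if z.2.2 < sfn ((H^[z.1] j) z.2.1) then
    ((nsup j : ℝ≥0∞)) ^ (-(1+β)) * ((rho j z.1 : ℝ≥0∞)) ^ β *
      G u p (E (H^[z.1] j) z.2.1 (z.2.2+1)) (E (H^[z.1] j) z.2.1 z.2.2)
  else 0

lemma rho_pos (j : Fin d → ℤ) (k : ℕ) : 0 < rho j k := by simp [rho]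

lemma rho_ne_zero (j : Fin d → ℤ) (k : ℕ) : ((rho j k : ℝ≥0∞)) ≠ 0 := by
  simp [(rho_pos j k).ne']

lemma rho_ne_top (j : Fin d → ℤ) (k : ℕ) : ((rho j k : ℝ≥0∞)) ≠ ⊤ := by
  simp

/-- The per-site estimate. -/
lemma perj (hd : 0 < d) {p β : ℝ} (hp1 : 1 < p) (hβ0 : 0 < β) (hβp : β < p - 1)
    (u : (Fin d → ℤ) → ℂ) (hu : u 0 = 0) (j : Fin d → ℤ) (hj : j ≠ 0) :
    ENNReal.ofReal (‖u j‖ ^ p / zsup j ^ p)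
      ≤ (3 * d * (1 - ((2:ℝ≥0∞)⁻¹) ^ (1 - β/(p-1)))⁻¹) ^ (p-1) *
          ∑ z ∈ Finset.range (nsup j) ×ˢ ((Finset.univ : Finset (Fin d)) ×ˢ Finset.range (nsup j)),
            Phi u p β j z := by
  classical
  set R := nsup j with hRdef
  have hR1 : 1 ≤ R := by
    rcases Nat.eq_zero_or_pos R with h | h
    · exact absurd (nsup_eq_zero_iff.mp h) hj
    · exact h
  set q := p.conjExponent with hqdef
  have hpq : p.HolderConjugate q := Real.HolderConjugate.conjExponent hp1
  have hp0 : (0:ℝ) < p := by linarith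
  have hq1 : 1 < q := hpq.symm.lt
  have hq0 : (0:ℝ) < q := by linarith
  have hqeq : q = p / (p - 1) := rfl
  have hp1' : p - 1 ≠ 0 := by linarith
  set δ := β / (p - 1) with hδdef
  set γ := 1 - δ with hγdef
  have hδ0 : 0 < δ := div_pos hβ0 (by linarith)
  have hδ1 : δ < 1 := (div_lt_one (by linarith)).mpr hβp
  have hγ0 : 0 < γ := by simp only [hγdef]; linarith
  have hγ1 : γ ≤ 1 := by simp only [hγdef]; linarith
  set α := β / p with hαdef
  have hαp : α * p = β := by rw [hαdef]; field_simp
  have hαq : α * q = δ := by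
    rw [hαdef, hqdef, Real.conjExponent, hδdef]; field_simp; try ring
  have hpq' : 1/q * p = p - 1 := by
    rw [hqdef, Real.conjExponent]; field_simp
  set F := Finset.range R ×ˢ ((Finset.univ : Finset (Fin d)) ×ˢ Finset.range R) with hFdef
  set χ : ℕ × Fin d × ℕ → Prop := fun z => z.2.2 < sfn ((H^[z.1] j) z.2.1) with hχdef
  set DD : ℕ × Fin d × ℕ → ℝ≥0∞ := fun z =>
    ENNReal.ofReal (‖u (E (H^[z.1] j) z.2.1 (z.2.2+1)) - u (E (H^[z.1] j) z.2.1 z.2.2)‖)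
    with hDDdef
  -- Step (b): telescoping bound
  have step_b : ENNReal.ofReal (‖u j‖)
      ≤ ∑ z ∈ F, (if χ z then DD z else 0) := by
    have htel := telescope u hu j (K := R) (Nat.lt_two_pow_self)
    have habs : ‖u j‖ ≤
        ∑ z ∈ F, (if χ z then
          ‖u (E (H^[z.1] j) z.2.1 (z.2.2+1)) - u (E (H^[z.1] j) z.2.1 z.2.2)‖ else 0) := by
      have h1 : u j = ∑ z ∈ F, (if χ z then
          (u (E (H^[z.1] j) z.2.1 (z.2.2+1)) - u (E (H^[z.1] j) z.2.1 z.2.2)) else 0) := by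
        rw [htel, Finset.sum_product]
        refine Finset.sum_congr rfl fun k _ => ?_
        rw [Finset.sum_product]
      calc ‖u j‖ = ‖∑ z ∈ F, (if χ z then
          (u (E (H^[z.1] j) z.2.1 (z.2.2+1)) - u (E (H^[z.1] j) z.2.1 z.2.2)) else 0)‖ := by rw [← h1]
      _ ≤ ∑ z ∈ F, ‖if χ z then
          (u (E (H^[z.1] j) z.2.1 (z.2.2+1)) - u (E (H^[z.1] j) z.2.1 z.2.2)) else 0‖ :=
            norm_sum_le _ _
      _ = _ := by
        refine Finset.sum_congr rfl fun z _ => ?_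
        rcases em (χ z) with h | h
        · rw [if_pos h, if_pos h]
        · rw [if_neg h, if_neg h, norm_zero]
    calc ENNReal.ofReal (‖u j‖) ≤ ENNReal.ofReal _ := ENNReal.ofReal_le_ofReal habs
    _ = ∑ z ∈ F, (if χ z then DD z else 0) := by
      rw [ENNReal.ofReal_sum_of_nonneg (fun z _ => by positivity)]
      refine Finset.sum_congr rfl fun z _ => ?_
      rcases em (χ z) with h | h
      · rw [if_pos h, if_pos h]
      · rw [if_neg h, if_neg h, ENNReal.ofReal_zero]
  -- Hölder
  set fA : ℕ × Fin d × ℕ → ℝ≥0∞ := fun z =>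
    if χ z then ((rho j z.1 : ℝ≥0∞)) ^ α * DD z else 0 with hfAdef
  set fB : ℕ × Fin d × ℕ → ℝ≥0∞ := fun z =>
    if χ z then ((rho j z.1 : ℝ≥0∞)) ^ (-α) else 0 with hfBdef
  have hprod : ∀ z, (if χ z then DD z else 0) = fA z * fB z := by
    intro z
    rcases em (χ z) with h | h
    · rw [hfAdef, hfBdef]
      simp only [if_pos h]
      rw [mul_comm (((rho j z.1 : ℝ≥0∞)) ^ α) (DD z), mul_assoc,
        ← ENNReal.rpow_add _ _ (rho_ne_zero j z.1) (rho_ne_top j z.1)]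
      simp
    · simp [hfAdef, hfBdef, if_neg h]
  have holder : ∑ z ∈ F, (if χ z then DD z else 0)
      ≤ (∑ z ∈ F, fA z ^ p) ^ (1/p) * (∑ z ∈ F, fB z ^ q) ^ (1/q) := by
    rw [Finset.sum_congr rfl fun z _ => hprod z]
    exact ENNReal.inner_le_Lp_mul_Lq F fA fB hpq
  -- identify the two Hölder factors
  have hfBq : ∀ z, fB z ^ q = if χ z then ((rho j z.1 : ℝ≥0∞)) ^ (-δ) else 0 := by
    intro z
    rcases em (χ z) with h | h
    · rw [hfBdef]; simp only [if_pos h]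
      rw [← ENNReal.rpow_mul, show -α * q = -δ by rw [neg_mul, hαq]]
    · simp [hfBdef, if_neg h, ENNReal.zero_rpow_of_pos hq0]
  have hfAp : ∀ z, fA z ^ p = if χ z then ((rho j z.1 : ℝ≥0∞)) ^ β * DD z ^ p else 0 := by
    intro z
    rcases em (χ z) with h | h
    · rw [hfAdef]; simp only [if_pos h]
      rw [ENNReal.mul_rpow_of_nonneg _ _ hp0.le, ← ENNReal.rpow_mul, hαp]
    · simp [hfAdef, if_neg h, ENNReal.zero_rpow_of_pos hp0]
  -- Step (d): bound on the weight factor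
  set rr : ℝ≥0∞ := ((2:ℝ≥0∞)⁻¹) ^ γ with hrrdef
  set CA : ℝ≥0∞ := 3 * d * (1 - rr)⁻¹ with hCAdef
  have key : ∀ k : ℕ,
      (∑ i : Fin d, (sfn ((H^[k] j) i) : ℝ≥0∞)) * ((rho j k : ℝ≥0∞)) ^ (-δ)
        ≤ 3 * d * (((R:ℝ≥0∞)) ^ γ * rr ^ k) := by
    intro k
    rcases Nat.eq_zero_or_pos (nsup (H^[k] j)) with hn0 | hn1
    · have hz : ∀ i : Fin d, sfn ((H^[k] j) i) = 0 := by
        intro i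
        have h1 := natAbs_le_nsup (H^[k] j) i
        rw [hn0] at h1
        rw [sfn]; omega
      simp [hz]
    · set n := nsup (H^[k] j) with hndef
      have hnn0 : ((n:ℝ≥0∞)) ≠ 0 := by simp [hn1.ne']
      have hnntop : ((n:ℝ≥0∞)) ≠ ⊤ := by simp
      have h1 : (∑ i : Fin d, (sfn ((H^[k] j) i) : ℝ≥0∞)) ≤ (d : ℝ≥0∞) * (n:ℝ≥0∞) := by
        calc (∑ i : Fin d, (sfn ((H^[k] j) i) : ℝ≥0∞)) ≤ ∑ _i : Fin d, (n:ℝ≥0∞) := by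
              apply Finset.sum_le_sum
              intro i _
              have h2 : sfn ((H^[k] j) i) ≤ n := by
                have := natAbs_le_nsup (H^[k] j) i
                rw [sfn]; omega
              exact_mod_cast Nat.cast_le.mpr h2
        _ = (d : ℝ≥0∞) * (n:ℝ≥0∞) := by
              rw [Finset.sum_const, Finset.card_univ, Fintype.card_fin, nsmul_eq_mul]
      have h2 : ((n:ℝ≥0∞)) ≤ 3 * ((rho j k : ℝ≥0∞)) := by
        have ha := nsup_le_two_H (H^[k] j)
        have hb : nsup (H (H^[k] j)) ≤ rho j k := by
          rw [show H (H^[k] j) = H^[k+1] j from (Function.iterate_succ_apply' H k j).symm]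
          exact le_sup_left
        have hc : 1 ≤ rho j k := le_sup_right
        have : n ≤ 3 * rho j k := by omega
        calc ((n:ℝ≥0∞)) ≤ ((3 * rho j k : ℕ) : ℝ≥0∞) := Nat.cast_le.mpr this
        _ = 3 * ((rho j k : ℝ≥0∞)) := by push_cast; ring
      have h3 : ((rho j k : ℝ≥0∞)) ^ (-δ) ≤ 3 ^ δ * ((n:ℝ≥0∞)) ^ (-δ) := by
        have hup : ((n:ℝ≥0∞)) ^ δ ≤ 3 ^ δ * ((rho j k : ℝ≥0∞)) ^ δ := by
          rw [← ENNReal.mul_rpow_of_nonneg _ _ hδ0.le]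
          exact ENNReal.rpow_le_rpow h2 hδ0.le
        have hdiv : ((n:ℝ≥0∞)) ^ δ * (((rho j k : ℝ≥0∞)) ^ δ)⁻¹ ≤ 3 ^ δ := by
          rw [← div_eq_mul_inv]
          exact ENNReal.div_le_of_le_mul hup
        rw [ENNReal.rpow_neg, ENNReal.rpow_neg]
        calc (((rho j k : ℝ≥0∞)) ^ δ)⁻¹
            = (((n:ℝ≥0∞)) ^ δ)⁻¹ * (((n:ℝ≥0∞)) ^ δ * (((rho j k : ℝ≥0∞)) ^ δ)⁻¹) := by
              have hnpos : (0:ℝ≥0∞) < ((n:ℝ≥0∞)) := by exact_mod_cast hn1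
              rw [← mul_assoc, ENNReal.inv_mul_cancel
                (ENNReal.rpow_pos hnpos hnntop).ne'
                (ENNReal.rpow_ne_top_of_nonneg hδ0.le hnntop), one_mul]
        _ ≤ (((n:ℝ≥0∞)) ^ δ)⁻¹ * 3 ^ δ := mul_le_mul_right hdiv _
        _ = 3 ^ δ * (((n:ℝ≥0∞)) ^ δ)⁻¹ := mul_comm _ _
      have h35 : (3:ℝ≥0∞) ^ δ ≤ 3 := by
        calc (3:ℝ≥0∞) ^ δ ≤ (3:ℝ≥0∞) ^ (1:ℝ) :=
          ENNReal.rpow_le_rpow_of_exponent_le (by norm_num) hδ1.le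
        _ = 3 := ENNReal.rpow_one _
      have h4 : ((n:ℝ≥0∞)) * ((n:ℝ≥0∞)) ^ (-δ) = ((n:ℝ≥0∞)) ^ γ := by
        nth_rewrite 1 [← ENNReal.rpow_one ((n:ℝ≥0∞))]
        rw [← ENNReal.rpow_add _ _ hnn0 hnntop, show (1:ℝ) + -δ = γ by rw [hγdef]; ring]
      have h5 : ((n:ℝ≥0∞)) ^ γ ≤ ((R:ℝ≥0∞)) ^ γ * rr ^ k := by
        have hmul : ((n:ℝ≥0∞)) * (2:ℝ≥0∞) ^ k ≤ ((R:ℝ≥0∞)) := by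
          have := pow_mul_nsup_iter_le j k
          calc ((n:ℝ≥0∞)) * (2:ℝ≥0∞) ^ k = ((2 ^ k * n : ℕ) : ℝ≥0∞) := by push_cast; ring
          _ ≤ ((R:ℝ≥0∞)) := Nat.cast_le.mpr this
        have hle : ((n:ℝ≥0∞)) ≤ ((R:ℝ≥0∞)) * ((2:ℝ≥0∞)⁻¹) ^ k := by
          rw [← ENNReal.inv_pow, ← div_eq_mul_inv]
          exact ENNReal.le_div_iff_mul_le (Or.inl (by positivity)) (Or.inl (by simp)) |>.mpr hmul
        calc ((n:ℝ≥0∞)) ^ γ ≤ (((R:ℝ≥0∞)) * ((2:ℝ≥0∞)⁻¹) ^ k) ^ γ :=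
              ENNReal.rpow_le_rpow hle hγ0.le
        _ = ((R:ℝ≥0∞)) ^ γ * (((2:ℝ≥0∞)⁻¹) ^ k) ^ γ := ENNReal.mul_rpow_of_nonneg _ _ hγ0.le
        _ = ((R:ℝ≥0∞)) ^ γ * rr ^ k := by
              congr 1
              rw [← ENNReal.rpow_natCast ((2:ℝ≥0∞)⁻¹) k, ← ENNReal.rpow_mul, mul_comm (k:ℝ) γ,
                ENNReal.rpow_mul, hrrdef, ENNReal.rpow_natCast]
      calc (∑ i : Fin d, (sfn ((H^[k] j) i) : ℝ≥0∞)) * ((rho j k : ℝ≥0∞)) ^ (-δ)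
          ≤ ((d : ℝ≥0∞) * (n:ℝ≥0∞)) * (3 ^ δ * ((n:ℝ≥0∞)) ^ (-δ)) := mul_le_mul' h1 h3
      _ = 3 ^ δ * (d : ℝ≥0∞) * (((n:ℝ≥0∞)) * ((n:ℝ≥0∞)) ^ (-δ)) := by ring
      _ = 3 ^ δ * (d : ℝ≥0∞) * ((n:ℝ≥0∞)) ^ γ := by rw [h4]
      _ ≤ 3 * (d : ℝ≥0∞) * (((R:ℝ≥0∞)) ^ γ * rr ^ k) := by
            exact mul_le_mul' (mul_le_mul_left h35 _) h5
  have step_d : (∑ z ∈ F, fB z ^ q) ≤ CA * ((R:ℝ≥0∞)) ^ γ := by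
    have hsplit : (∑ z ∈ F, fB z ^ q)
        = ∑ k ∈ Finset.range R, (∑ i : Fin d, (sfn ((H^[k] j) i) : ℝ≥0∞)) *
            ((rho j k : ℝ≥0∞)) ^ (-δ) := by
      calc (∑ z ∈ F, fB z ^ q)
          = ∑ z ∈ F, (if χ z then ((rho j z.1 : ℝ≥0∞)) ^ (-δ) else 0) :=
            Finset.sum_congr rfl fun z _ => hfBq z
      _ = ∑ k ∈ Finset.range R, ∑ w ∈ (Finset.univ : Finset (Fin d)) ×ˢ Finset.range R,
            (if w.2 < sfn ((H^[k] j) w.1) then ((rho j k : ℝ≥0∞)) ^ (-δ) else 0) := by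
            rw [hFdef, Finset.sum_product]
      _ = _ := by
        refine Finset.sum_congr rfl fun k _ => ?_
        rw [Finset.sum_product]
        calc ∑ i : Fin d, ∑ t ∈ Finset.range R,
              (if t < sfn ((H^[k] j) i) then ((rho j k : ℝ≥0∞)) ^ (-δ) else 0)
            = ∑ i : Fin d, (sfn ((H^[k] j) i) : ℝ≥0∞) * ((rho j k : ℝ≥0∞)) ^ (-δ) := by
              refine Finset.sum_congr rfl fun i _ => ?_
              rw [sum_ite_range _ (sfn_le_nsup_iter j k i), Finset.sum_const, nsmul_eq_mul,
                Finset.card_range]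
        _ = (∑ i : Fin d, (sfn ((H^[k] j) i) : ℝ≥0∞)) * ((rho j k : ℝ≥0∞)) ^ (-δ) := by
              rw [Finset.sum_mul]
    rw [hsplit]
    calc ∑ k ∈ Finset.range R, (∑ i : Fin d, (sfn ((H^[k] j) i) : ℝ≥0∞)) *
            ((rho j k : ℝ≥0∞)) ^ (-δ)
        ≤ ∑ k ∈ Finset.range R, 3 * d * (((R:ℝ≥0∞)) ^ γ * rr ^ k) :=
          Finset.sum_le_sum fun k _ => key k
    _ = 3 * d * ((R:ℝ≥0∞)) ^ γ * ∑ k ∈ Finset.range R, rr ^ k := by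
          rw [Finset.mul_sum]; refine Finset.sum_congr rfl fun k _ => by ring
    _ ≤ 3 * d * ((R:ℝ≥0∞)) ^ γ * ∑' k : ℕ, rr ^ k :=
          mul_le_mul_right (ENNReal.sum_le_tsum _) _
    _ = 3 * d * ((R:ℝ≥0∞)) ^ γ * (1 - rr)⁻¹ := by rw [ENNReal.tsum_geometric]
    _ = CA * ((R:ℝ≥0∞)) ^ γ := by rw [hCAdef]; ring
  -- Step (e): combine
  have hRpos : (0:ℝ) < ((R:ℕ) : ℝ) := by exact_mod_cast hR1
  have hRne0 : ((R:ℝ≥0∞)) ≠ 0 := by simp; omega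
  have hRnetop : ((R:ℝ≥0∞)) ≠ ⊤ := by simp
  have lhs_eq : ENNReal.ofReal (‖u j‖ ^ p / zsup j ^ p)
      = (ENNReal.ofReal (‖u j‖)) ^ p * (((R:ℝ≥0∞)) ^ p)⁻¹ := by
    rw [zsup_eq, ← hRdef, ENNReal.ofReal_div_of_pos (Real.rpow_pos_of_pos hRpos p),
      div_eq_mul_inv]
    congr 1
    · exact (ENNReal.ofReal_rpow_of_nonneg (by positivity) hp0.le).symm
    · rw [← ENNReal.ofReal_rpow_of_nonneg (by positivity) hp0.le, ENNReal.ofReal_natCast]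
  set X := ∑ z ∈ F, fA z ^ p with hXdef
  have hXbound : (ENNReal.ofReal (‖u j‖)) ^ p
      ≤ X * (CA * ((R:ℝ≥0∞)) ^ γ) ^ (p-1) := by
    calc (ENNReal.ofReal (‖u j‖)) ^ p
        ≤ ((∑ z ∈ F, fA z ^ p) ^ (1/p) * (∑ z ∈ F, fB z ^ q) ^ (1/q)) ^ p :=
          ENNReal.rpow_le_rpow (le_trans step_b holder) hp0.le
    _ = X * ((∑ z ∈ F, fB z ^ q)) ^ (p-1) := by
          rw [ENNReal.mul_rpow_of_nonneg _ _ hp0.le, ← ENNReal.rpow_mul, ← ENNReal.rpow_mul,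
            one_div_mul_cancel hp0.ne', ENNReal.rpow_one, hpq']
    _ ≤ X * (CA * ((R:ℝ≥0∞)) ^ γ) ^ (p-1) :=
          mul_le_mul_right (ENNReal.rpow_le_rpow step_d (by linarith)) _
  have hexp : γ * (p-1) - p = -(1+β) := by
    have hδp : δ * (p - 1) = β := by rw [hδdef]; field_simp
    rw [hγdef]; nlinarith [hδp]
  have hfinal : X * (CA * ((R:ℝ≥0∞)) ^ γ) ^ (p-1) * (((R:ℝ≥0∞)) ^ p)⁻¹
      = CA ^ (p-1) * ∑ z ∈ F, Phi u p β j z := by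
    have hsm : (CA * ((R:ℝ≥0∞)) ^ γ) ^ (p-1) = CA ^ (p-1) * ((R:ℝ≥0∞)) ^ (γ * (p-1)) := by
      rw [ENNReal.mul_rpow_of_nonneg _ _ (by linarith : (0:ℝ) ≤ p - 1), ← ENNReal.rpow_mul]
    have hpow : ((R:ℝ≥0∞)) ^ (γ * (p-1)) * (((R:ℝ≥0∞)) ^ p)⁻¹ = ((R:ℝ≥0∞)) ^ (-(1+β)) := by
      rw [← ENNReal.rpow_neg, ← ENNReal.rpow_add _ _ hRne0 hRnetop, ← hexp]
      ring_nf
    have hterm : ∀ z, ((R:ℝ≥0∞)) ^ (-(1+β)) * (fA z ^ p) = Phi u p β j z := by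
      intro z
      rw [hfAp z, Phi]
      rcases em (χ z) with h | h
      · rw [if_pos h, if_pos h]
        have hDG : DD z ^ p
            = G u p (E (H^[z.1] j) z.2.1 (z.2.2+1)) (E (H^[z.1] j) z.2.1 z.2.2) := by
          rw [hDDdef, G, ENNReal.ofReal_rpow_of_nonneg (by positivity) hp0.le]
        rw [← hDG]; ring
      · rw [if_neg h, if_neg h, mul_zero]
    calc X * (CA * ((R:ℝ≥0∞)) ^ γ) ^ (p-1) * (((R:ℝ≥0∞)) ^ p)⁻¹
        = CA ^ (p-1) * (((R:ℝ≥0∞)) ^ (γ * (p-1)) * (((R:ℝ≥0∞)) ^ p)⁻¹ * X) := by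
          rw [hsm]; ring
    _ = CA ^ (p-1) * (((R:ℝ≥0∞)) ^ (-(1+β)) * X) := by rw [hpow]
    _ = CA ^ (p-1) * ∑ z ∈ F, Phi u p β j z := by
          congr 1
          rw [hXdef, Finset.mul_sum]
          exact Finset.sum_congr rfl fun z _ => hterm z
  calc ENNReal.ofReal (‖u j‖ ^ p / zsup j ^ p)
      = (ENNReal.ofReal (‖u j‖)) ^ p * (((R:ℝ≥0∞)) ^ p)⁻¹ := lhs_eq
  _ ≤ X * (CA * ((R:ℝ≥0∞)) ^ γ) ^ (p-1) * (((R:ℝ≥0∞)) ^ p)⁻¹ :=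
        mul_le_mul_left hXbound _
  _ = CA ^ (p-1) * ∑ z ∈ F, Phi u p β j z := hfinal
  _ = (3 * d * (1 - ((2:ℝ≥0∞)⁻¹) ^ (1 - β/(p-1)))⁻¹) ^ (p-1) * ∑ z ∈ F, Phi u p β j z := by
        rw [hCAdef, hrrdef, hγdef, hδdef]

end HardyZ
namespace HardyZ
variable {d : ℕ}

def valid (j : Fin d → ℤ) (z : ℕ × Fin d × ℕ) : Prop := z.2.2 < sfn ((H^[z.1] j) z.2.1)

instance (j : Fin d → ℤ) (z : ℕ × Fin d × ℕ) : Decidable (valid j z) := by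
  unfold valid; infer_instance

def apt (j : Fin d → ℤ) (z : ℕ × Fin d × ℕ) : Fin d → ℤ := E (H^[z.1] j) z.2.1 (z.2.2+1)
def bpt (j : Fin d → ℤ) (z : ℕ × Fin d × ℕ) : Fin d → ℤ := E (H^[z.1] j) z.2.1 z.2.2

lemma Phi_eq (u : (Fin d → ℤ) → ℂ) (p β : ℝ) (j : Fin d → ℤ) (z : ℕ × Fin d × ℕ) :
    Phi u p β j z = if valid j z then
      ((nsup j : ℝ≥0∞)) ^ (-(1+β)) * ((rho j z.1 : ℝ≥0∞)) ^ β *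
        G u p (apt j z) (bpt j z) else 0 := rfl

lemma apt_ne_zero {j : Fin d → ℤ} {z : ℕ × Fin d × ℕ} (h : valid j z) : apt j z ≠ 0 := by
  have hy : (H^[z.1] j) z.2.1 ≠ 0 := sfn_pos_ne h
  intro h0
  have h2 : E (H^[z.1] j) z.2.1 (z.2.2+1) z.2.1 = 0 := by
    have h3 : apt j z z.2.1 = 0 := by rw [h0]; rfl
    exact h3
  have h1 := E_i_natAbs hy (z.2.2 + 1)
  rw [h2] at h1
  simp at h1

lemma nbr_apt_bpt {j : Fin d → ℤ} {z : ℕ × Fin d × ℕ} (h : valid j z) :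
    nbrZ (apt j z) (bpt j z) := nbr_E h

/-- junk target -/
def junkQ (hd : 0 < d) :
    Σ (a : {j : Fin d → ℤ // j ≠ 0}), {b : Fin d → ℤ // nbrZ a.1 b} := by
  refine ⟨⟨fun l => if l = ⟨0, hd⟩ then 1 else 0, ?_⟩, ⟨0, ?_⟩⟩
  · intro h0
    have := congrFun h0 ⟨0, hd⟩
    simp at this
  · unfold nbrZ
    have : ∀ l : Fin d, ((if l = ⟨0, hd⟩ then (1:ℤ) else 0) - (0:ℤ)) ^ 2
        = if l = ⟨0, hd⟩ then 1 else 0 := by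
      intro l; rcases em (l = ⟨0, hd⟩) with h | h <;> simp [h]
    rw [show (fun l : Fin d => _) = _ from rfl]
    calc ∑ l : Fin d, ((if l = ⟨0, hd⟩ then (1:ℤ) else 0) - (0:ℤ)) ^ 2
        = ∑ l : Fin d, (if l = ⟨0, hd⟩ then (1:ℤ) else 0) := Finset.sum_congr rfl fun l _ => this l
    _ = 1 := by rw [Finset.sum_ite_eq' Finset.univ (⟨0, hd⟩ : Fin d) (fun _ => (1:ℤ))]; simp

/-- the classifying map to (ordered, pointed) edges -/
noncomputable def psi (hd : 0 < d) (s : {j : Fin d → ℤ // j ≠ 0} × (ℕ × Fin d × ℕ)) :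
    Σ (a : {j : Fin d → ℤ // j ≠ 0}), {b : Fin d → ℤ // nbrZ a.1 b} :=
  if h : valid s.1.1 s.2 then
    ⟨⟨apt s.1.1 s.2, apt_ne_zero h⟩, ⟨bpt s.1.1 s.2, nbr_apt_bpt h⟩⟩
  else junkQ hd

lemma psi_spec {hd : 0 < d} {s : {j : Fin d → ℤ // j ≠ 0} × (ℕ × Fin d × ℕ)}
    {qq : Σ (a : {j : Fin d → ℤ // j ≠ 0}), {b : Fin d → ℤ // nbrZ a.1 b}}
    (h : valid s.1.1 s.2) (heq : psi hd s = qq) :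
    apt s.1.1 s.2 = qq.1.1 ∧ bpt s.1.1 s.2 = qq.2.1 := by
  rw [psi, dif_pos h] at heq
  constructor <;> rw [← heq]

/-- the `j`-localizing box -/
noncomputable def JJ (k : ℕ) (i : Fin d) (b : Fin d → ℤ) : Finset (Fin d → ℤ) :=
  Fintype.piFinset fun l =>
    if l < i then Finset.Icc (2^k * b l - 2^k) (2^k * b l + 2^k)
    else if l = i then
      Finset.Icc (-(2^(k+2) * ((nsup b ⊔ 1 : ℕ) : ℤ))) (2^(k+2) * ((nsup b ⊔ 1 : ℕ) : ℤ))
    else Finset.Icc (2^(k+1) * b l - 2^(k+1)) (2^(k+1) * b l + 2^(k+1))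

lemma card_JJ (k : ℕ) (i : Fin d) (b : Fin d → ℤ) :
    (JJ k i b).card ≤ 2 ^ ((k+4)*d) * (nsup b ⊔ 1) := by
  rw [JJ, Fintype.card_piFinset]
  calc (∏ l : Fin d, (if l < i then Finset.Icc (2^k * b l - 2^k) (2^k * b l + 2^k)
      else if l = i then
        Finset.Icc (-(2^(k+2) * ((nsup b ⊔ 1 : ℕ) : ℤ))) (2^(k+2) * ((nsup b ⊔ 1 : ℕ) : ℤ))
      else Finset.Icc (2^(k+1) * b l - 2^(k+1)) (2^(k+1) * b l + 2^(k+1))).card)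
      ≤ ∏ l : Fin d, (if l = i then (nsup b ⊔ 1) else 1) * 2 ^ (k+4) := by
        apply Finset.prod_le_prod'
        intro l _
        rcases em (l < i) with h | h
        · rw [if_pos h]
          have hne : l ≠ i := ne_of_lt h
          rw [if_neg hne, Int.card_Icc]
          have : (2^k * b l + 2^k + 1 - (2^k * b l - 2^k)) = 2^(k+1) + 1 := by ring
          rw [this]
          have hc : ((2:ℤ)^(k+1) + 1) = (((2^(k+1) + 1 : ℕ)) : ℤ) := by push_cast; ring
          rw [hc, Int.toNat_natCast, one_mul]
          have : (2:ℕ)^(k+1) + 1 ≤ 2^(k+4) := by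
            have h3 : (2:ℕ)^(k+1) + 1 ≤ 2^(k+1) + 2^(k+1) := by
              have : (1:ℕ) ≤ 2^(k+1) := Nat.one_le_two_pow
              omega
            have h4 : (2:ℕ)^(k+1) + 2^(k+1) = 2^(k+2) := by ring
            have h5 : (2:ℕ)^(k+2) ≤ 2^(k+4) := Nat.pow_le_pow_right (by norm_num) (by omega)
            omega
          exact this
        · rcases em (l = i) with h2 | h2
          · rw [if_neg h, if_pos h2, if_pos h2, Int.card_Icc]
            set m : ℕ := nsup b ⊔ 1 with hm
            have hm1 : 1 ≤ m := le_sup_right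
            have : ((2:ℤ)^(k+2) * (m:ℤ) + 1 - -(2^(k+2) * (m:ℤ))) = 2^(k+3) * (m:ℤ) + 1 := by ring
            rw [this]
            have hc : ((2:ℤ)^(k+3) * (m:ℤ) + 1) = (((2^(k+3) * m + 1 : ℕ)) : ℤ) := by
              push_cast; ring
            rw [hc, Int.toNat_natCast]
            have h4 : (2:ℕ)^(k+3) * m + 1 ≤ 2^(k+4) * m := by
              have h5 : (1:ℕ) ≤ 2^(k+3) * m :=
                Nat.one_le_iff_ne_zero.mpr (by positivity)
              have h6 : (2:ℕ)^(k+3) * m + 2^(k+3) * m = 2^(k+4) * m := by ring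
              omega
            calc (2:ℕ)^(k+3) * m + 1 ≤ 2^(k+4) * m := h4
            _ = m * 2^(k+4) := by ring
          · rw [if_neg h, if_neg h2, if_neg h2, Int.card_Icc]
            have : (2^(k+1) * b l + 2^(k+1) + 1 - (2^(k+1) * b l - 2^(k+1))) = 2^(k+2) + 1 := by ring
            rw [this, one_mul]
            have hc : ((2:ℤ)^(k+2) + 1) = (((2^(k+2) + 1 : ℕ)) : ℤ) := by push_cast; ring
            rw [hc, Int.toNat_natCast]
            have h4 : (2:ℕ)^(k+2) + 1 ≤ 2^(k+3) := by
              have : (1:ℕ) ≤ 2^(k+2) := Nat.one_le_two_pow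
              have h5 : (2:ℕ)^(k+2) + 2^(k+2) = 2^(k+3) := by ring
              omega
            calc (2:ℕ)^(k+2) + 1 ≤ 2^(k+3) := h4
            _ ≤ 2^(k+4) := Nat.pow_le_pow_right (by norm_num) (by omega)
      _ = (∏ l : Fin d, (if l = i then (nsup b ⊔ 1) else 1)) * ∏ _l : Fin d, 2 ^ (k+4) := by
          rw [← Finset.prod_mul_distrib]
      _ = (nsup b ⊔ 1) * 2 ^ ((k+4)*d) := by
          rw [Finset.prod_ite_eq' Finset.univ i (fun _ => (nsup b ⊔ 1))]
          simp [Finset.prod_const, Finset.card_univ, pow_mul]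
      _ = 2 ^ ((k+4)*d) * (nsup b ⊔ 1) := mul_comm _ _

end HardyZ
namespace HardyZ
variable {d : ℕ}

lemma bpt_coord_lt {j : Fin d → ℤ} {z : ℕ × Fin d × ℕ} {l : Fin d} (hl : l < z.2.1) :
    bpt j z l = (H^[z.1] j) l := by
  simp [bpt, E, hl]

lemma bpt_coord_gt {j : Fin d → ℤ} {z : ℕ × Fin d × ℕ} {l : Fin d} (hl : z.2.1 < l) :
    bpt j z l = half ((H^[z.1] j) l) := by
  simp [bpt, E, not_lt.2 hl.le, ne_of_gt hl]

lemma bpt_coord_eq {j : Fin d → ℤ} {z : ℕ × Fin d × ℕ} (h : valid j z) :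
    (bpt j z z.2.1).natAbs = ((H^[z.1] j) z.2.1).natAbs / 2 + z.2.2 :=
  E_i_natAbs (sfn_pos_ne h) z.2.2

lemma t_unique {j : Fin d → ℤ} {z : ℕ × Fin d × ℕ} {b : Fin d → ℤ}
    (h : valid j z) (hb : bpt j z = b) :
    z.2.2 = (b z.2.1).natAbs - ((H^[z.1+1] j) z.2.1).natAbs := by
  have hbi : (b z.2.1).natAbs = ((H^[z.1] j) z.2.1).natAbs / 2 + z.2.2 := by
    rw [← hb]; exact bpt_coord_eq h
  have hH : (H^[z.1+1] j) z.2.1 = half ((H^[z.1] j) z.2.1) := by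
    rw [Function.iterate_succ_apply']; rfl
  rw [hbi, hH, half_natAbs]
  omega

lemma nsup_y_lb {j : Fin d → ℤ} {z : ℕ × Fin d × ℕ} {b : Fin d → ℤ}
    (h : valid j z) (hb : bpt j z = b) : nsup b ⊔ 1 ≤ nsup (H^[z.1] j) := by
  apply sup_le
  · rw [← hb]; exact nsup_E_le (le_of_lt h)
  · have hy := sfn_pos_ne h
    have h1 : 1 ≤ ((H^[z.1] j) z.2.1).natAbs := by
      rcases Nat.eq_zero_or_pos ((H^[z.1] j) z.2.1).natAbs with h0 | h0
      · exact absurd (Int.natAbs_eq_zero.mp h0) hy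
      · exact h0
    exact le_trans h1 (natAbs_le_nsup _ _)

lemma rho_le_m {j : Fin d → ℤ} {z : ℕ × Fin d × ℕ} {b : Fin d → ℤ}
    (h : valid j z) (hb : bpt j z = b) : rho j z.1 ≤ nsup b ⊔ 1 := by
  rw [rho]
  apply sup_le_sup_right
  have h1 : nsup (H^[z.1+1] j) = nsup (H (H^[z.1] j)) := by
    rw [Function.iterate_succ_apply']
  rw [h1, ← hb]
  exact nsup_H_le_E _ _ _

lemma R_lb {j : Fin d → ℤ} {z : ℕ × Fin d × ℕ} {b : Fin d → ℤ}
    (h : valid j z) (hb : bpt j z = b) : 2 ^ z.1 * (nsup b ⊔ 1) ≤ nsup j :=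
  le_trans (Nat.mul_le_mul_left _ (nsup_y_lb h hb)) (pow_mul_nsup_iter_le j z.1)

lemma mem_JJ {j : Fin d → ℤ} {z : ℕ × Fin d × ℕ} {b : Fin d → ℤ}
    (h : valid j z) (hb : bpt j z = b) : j ∈ JJ z.1 z.2.1 b := by
  rw [JJ, Fintype.mem_piFinset]
  intro l
  have hone : (1:ℕ) ≤ 2^z.1 := Nat.one_le_two_pow
  have hcast : ((2^z.1 : ℕ):ℤ) = (2:ℤ)^z.1 := by push_cast; ring
  have hiter' : |j l - 2^z.1 * (H^[z.1] j) l| ≤ (2:ℤ)^z.1 - 1 := by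
    have h2 : (((j l - 2^z.1 * (H^[z.1] j) l).natAbs : ℕ) : ℤ) ≤ ((2^z.1 - 1 : ℕ) : ℤ) :=
      Int.ofNat_le.mpr (natAbs_sub_pow_iter j z.1 l)
    rw [Int.abs_eq_natAbs]
    calc ((j l - 2^z.1 * (H^[z.1] j) l).natAbs : ℤ) ≤ ((2^z.1 - 1 : ℕ) : ℤ) := h2
    _ = (2:ℤ)^z.1 - 1 := by
      rw [Nat.cast_sub hone, hcast]; norm_num
  have hpos : (0:ℤ) < 2^z.1 := by positivity
  rcases lt_trichotomy l z.2.1 with hl | hl | hl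
  · rw [if_pos hl, Finset.mem_Icc]
    have hbl : b l = (H^[z.1] j) l := by rw [← hb]; exact bpt_coord_lt hl
    rw [hbl]
    have hA := abs_le.mp hiter'
    constructor <;> [linarith [hA.1]; linarith [hA.2]]
  · rw [if_neg (by rw [hl]; exact lt_irrefl _), if_pos hl, Finset.mem_Icc]
    set M : ℕ := nsup b ⊔ 1 with hM
    have hM1 : (1:ℤ) ≤ (M:ℤ) := by exact_mod_cast (le_sup_right : 1 ≤ M)
    have hbM : |b z.2.1| ≤ (M:ℤ) := by
      rw [Int.abs_eq_natAbs]
      exact_mod_cast le_trans (natAbs_le_nsup b z.2.1) le_sup_left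
    have hbi : (b z.2.1).natAbs = ((H^[z.1] j) z.2.1).natAbs / 2 + z.2.2 := by
      rw [← hb]; exact bpt_coord_eq h
    have hyabs : |(H^[z.1] j) z.2.1| ≤ 2 * |b z.2.1| + 1 := by
      rw [Int.abs_eq_natAbs, Int.abs_eq_natAbs]
      have : ((H^[z.1] j) z.2.1).natAbs ≤ 2 * (b z.2.1).natAbs + 1 := by omega
      exact_mod_cast this
    subst hl
    have hA := abs_le.mp hiter'
    have h5 : |(2:ℤ)^z.1 * (H^[z.1] j) z.2.1| ≤ 2^z.1 * (2*(M:ℤ)+1) := by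
      rw [abs_mul, abs_of_nonneg hpos.le]
      exact mul_le_mul_of_nonneg_left (by linarith) hpos.le
    have h5' := abs_le.mp h5
    have h8 : (2:ℤ)^z.1 ≤ 2^z.1 * M := le_mul_of_one_le_right hpos.le hM1
    have hpw : (2:ℤ)^(z.1+2) = 4 * 2^z.1 := by ring
    rw [hpw]
    constructor <;> nlinarith [hA.1, hA.2, h5'.1, h5'.2]
  · rw [if_neg (not_lt.2 hl.le), if_neg (ne_of_gt hl), Finset.mem_Icc]
    have hbl : b l = half ((H^[z.1] j) l) := by rw [← hb]; exact bpt_coord_gt hl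
    have hhalf : |(H^[z.1] j) l - 2 * b l| ≤ 1 := by
      rw [hbl, Int.abs_eq_natAbs]
      exact_mod_cast natAbs_sub_two_half ((H^[z.1] j) l)
    have hkey : j l - 2^(z.1+1) * b l
        = (j l - 2^z.1 * (H^[z.1] j) l) + 2^z.1 * ((H^[z.1] j) l - 2 * b l) := by ring
    have h6 : |j l - 2^(z.1+1) * b l| ≤ 2^(z.1+1) := by
      rw [hkey]
      calc |(j l - 2^z.1 * (H^[z.1] j) l) + 2^z.1 * ((H^[z.1] j) l - 2 * b l)|
          ≤ |j l - 2^z.1 * (H^[z.1] j) l| + |2^z.1 * ((H^[z.1] j) l - 2 * b l)| := abs_add_le _ _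
      _ ≤ (2^z.1 - 1) + 2^z.1 * 1 := by
          gcongr
          rw [abs_mul, abs_of_nonneg hpos.le]
          exact mul_le_mul_of_nonneg_left hhalf hpos.le
      _ ≤ 2^(z.1+1) := by rw [show (2:ℤ)^(z.1+1) = 2 * 2^z.1 by ring]; linarith
    have hA := abs_le.mp h6
    constructor <;> [linarith [hA.1]; linarith [hA.2]]

end HardyZ

open HardyZ

set_option maxHeartbeats 2000000

/-- Discrete Hardy inequality on the full lattice `ℤ^d` for `d < p`,
for functions with `u(0) = 0`. -/
theorem hardy_p_large_Z (d : ℕ) (p : ℝ) (hd : 0 < d) (hdp : (d : ℝ) < p) :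
    ∃ c : ℝ, 0 ≤ c ∧ ∀ u : (Fin d → ℤ) → ℂ, u 0 = 0 →
      (∑' (j : {j : Fin d → ℤ // j ≠ 0}),
          ENNReal.ofReal (‖u j.1‖ ^ p / zsup j.1 ^ p))
        ≤ ENNReal.ofReal c *
            ∑' (j : {j : Fin d → ℤ // j ≠ 0})
              (k : {k : Fin d → ℤ // nbrZ j.1 k}),
              ENNReal.ofReal (‖u j.1 - u k.1‖ ^ p) := by
  classical
  have hd1 : (1:ℝ) ≤ d := by exact_mod_cast hd
  set β : ℝ := (p + d)/2 - 1 with hβdef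
  have hp1 : 1 < p := lt_of_le_of_lt hd1 hdp
  have hβ0 : 0 < β := by rw [hβdef]; linarith
  have hβp : β < p - 1 := by rw [hβdef]; linarith
  have hβd : (d:ℝ) - 1 < β := by rw [hβdef]; linarith
  set C7 : ℝ≥0∞ := (3 * d * (1 - ((2:ℝ≥0∞)⁻¹) ^ (1 - β/(p-1)))⁻¹) ^ (p-1) with hC7def
  set rr2 : ℝ≥0∞ := (2:ℝ≥0∞) ^ ((d:ℝ) - 1 - β) with hrr2def
  set C5 : ℝ≥0∞ := d * (2:ℝ≥0∞)^(4*d) * (1 - rr2)⁻¹ with hC5def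
  have hrr2lt : rr2 < 1 := by
    rw [hrr2def]
    exact ENNReal.rpow_lt_one_of_one_lt_of_neg (by norm_num) (by linarith)
  have hC7top : C7 ≠ ⊤ := by
    rw [hC7def]
    apply ENNReal.rpow_ne_top_of_nonneg (by linarith)
    apply ENNReal.mul_ne_top (ENNReal.mul_ne_top (by norm_num) (by simp))
    rw [Ne, ENNReal.inv_eq_top, tsub_eq_zero_iff_le]
    apply not_le_of_gt
    apply ENNReal.rpow_lt_one (by rw [ENNReal.inv_lt_one]; norm_num)
    have : β / (p-1) < 1 := (div_lt_one (by linarith)).mpr hβp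
    linarith
  have hC5top : C5 ≠ ⊤ := by
    rw [hC5def]
    apply ENNReal.mul_ne_top (ENNReal.mul_ne_top (by simp) ?_)
    · rw [Ne, ENNReal.inv_eq_top, tsub_eq_zero_iff_le]
      exact not_le_of_gt hrr2lt
    · exact ENNReal.pow_ne_top (by simp)
  refine ⟨(C7 * C5).toReal, ENNReal.toReal_nonneg, ?_⟩
  intro u hu
  rw [ENNReal.ofReal_toReal (ENNReal.mul_ne_top hC7top hC5top)]
  set Q := Σ (a : {j : Fin d → ℤ // j ≠ 0}), {b : Fin d → ℤ // nbrZ a.1 b} with hQdef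
  set ψ : ({j : Fin d → ℤ // j ≠ 0} × (ℕ × Fin d × ℕ)) → Q := psi hd with hψdef
  set Φ : ({j : Fin d → ℤ // j ≠ 0} × (ℕ × Fin d × ℕ)) → ℝ≥0∞ :=
    fun s => Phi u p β s.1.1 s.2 with hΦdef
  -- Step 1: pointwise estimate, summed
  have step1 : (∑' (j : {j : Fin d → ℤ // j ≠ 0}),
      ENNReal.ofReal (‖u j.1‖ ^ p / zsup j.1 ^ p))
      ≤ C7 * ∑' (s : {j : Fin d → ℤ // j ≠ 0} × (ℕ × Fin d × ℕ)), Φ s := by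
    calc (∑' (j : {j : Fin d → ℤ // j ≠ 0}),
        ENNReal.ofReal (‖u j.1‖ ^ p / zsup j.1 ^ p))
        ≤ ∑' (j : {j : Fin d → ℤ // j ≠ 0}), C7 *
            ∑ z ∈ Finset.range (nsup j.1) ×ˢ
              ((Finset.univ : Finset (Fin d)) ×ˢ Finset.range (nsup j.1)),
              Phi u p β j.1 z :=
          ENNReal.tsum_le_tsum fun j => perj hd hp1 hβ0 hβp u hu j.1 j.2
    _ ≤ ∑' (j : {j : Fin d → ℤ // j ≠ 0}), C7 * ∑' (z : ℕ × Fin d × ℕ), Phi u p β j.1 z :=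
          ENNReal.tsum_le_tsum fun j => mul_le_mul_right (ENNReal.sum_le_tsum _) _
    _ = C7 * ∑' (j : {j : Fin d → ℤ // j ≠ 0}), ∑' (z : ℕ × Fin d × ℕ), Phi u p β j.1 z :=
          ENNReal.tsum_mul_left
    _ = C7 * ∑' (s : {j : Fin d → ℤ // j ≠ 0} × (ℕ × Fin d × ℕ)), Φ s := by
          rw [ENNReal.tsum_prod']
  -- Step 2: fibering over edges
  have fib : ∑' (s : {j : Fin d → ℤ // j ≠ 0} × (ℕ × Fin d × ℕ)), Φ s
      = ∑' (qq : Q), ∑' (s : {s // ψ s = qq}), Φ s.1 := by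
    have h1 := Equiv.tsum_eq (Equiv.sigmaFiberEquiv ψ) Φ
    rw [← h1, ← ENNReal.tsum_sigma (fun qq (s : {s // ψ s = qq}) => Φ s.1)]
    rfl
  -- Step 3: fiber bound
  have fiberB : ∀ qq : Q, ∑' (s : {s // ψ s = qq}), Φ s.1 ≤ C5 * G u p qq.1.1 qq.2.1 := by
    intro qq
    set b : Fin d → ℤ := qq.2.1 with hbdef
    set m : ℕ := nsup b ⊔ 1 with hmdef
    have hm1 : 1 ≤ m := le_sup_right
    have hmne0 : ((m:ℝ≥0∞)) ≠ 0 := by simp [hmdef]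
    have hmnetop : ((m:ℝ≥0∞)) ≠ ⊤ := by simp
    set GG : ℝ≥0∞ := G u p qq.1.1 qq.2.1 with hGGdef
    set wbar : ℕ → ℝ≥0∞ := fun k =>
      (((2^k * m : ℕ) : ℝ≥0∞)) ^ (-(1+β)) * ((m:ℝ≥0∞)) ^ β * GG with hwbardef
    set FF : {j : Fin d → ℤ // j ≠ 0} → ℕ → Fin d → ℕ → ℝ≥0∞ := fun j k i t =>
      if ψ (j, (k, (i, t))) = qq ∧ valid j.1 (k, (i, t)) then
        ((nsup j.1 : ℝ≥0∞)) ^ (-(1+β)) * ((rho j.1 k : ℝ≥0∞)) ^ β * GG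
      else 0 with hFFdef
    -- pointwise domination on the fiber
    have hdom : ∀ s : {s // ψ s = qq}, Φ s.1 ≤ FF s.1.1 s.1.2.1 s.1.2.2.1 s.1.2.2.2 := by
      rintro ⟨⟨j, z⟩, hs⟩
      rcases em (valid j.1 z) with hv | hv
      · have hspec := psi_spec hv hs
        have hΦeq : Φ (j, z) = ((nsup j.1 : ℝ≥0∞)) ^ (-(1+β)) * ((rho j.1 z.1 : ℝ≥0∞)) ^ β * GG := by
          rw [hΦdef]
          show Phi u p β j.1 z = _
          rw [Phi_eq, if_pos hv, hGGdef, hspec.1, hspec.2]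
        rw [hΦeq, hFFdef]
        show _ ≤ if ψ (j, (z.1, (z.2.1, z.2.2))) = qq ∧ valid j.1 (z.1, (z.2.1, z.2.2)) then _ else 0
        rw [if_pos (by constructor <;> simpa using ‹_›)]
      · have hΦ0 : Φ (j, z) = 0 := by
          rw [hΦdef]; show Phi u p β j.1 z = 0; rw [Phi_eq, if_neg hv]
        rw [hΦ0]; exact zero_le
    have hsub : ∑' (s : {s // ψ s = qq}), Φ s.1
        ≤ ∑' (s : {j : Fin d → ℤ // j ≠ 0} × (ℕ × Fin d × ℕ)), FF s.1 s.2.1 s.2.2.1 s.2.2.2 := by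
      refine le_trans (ENNReal.tsum_le_tsum hdom) ?_
      exact Summable.tsum_le_tsum_of_inj Subtype.val Subtype.val_injective
        (fun _ _ => zero_le) (fun s => le_refl _) ENNReal.summable ENNReal.summable
    -- expand product tsums and swap
    have hexpand : ∑' (s : {j : Fin d → ℤ // j ≠ 0} × (ℕ × Fin d × ℕ)), FF s.1 s.2.1 s.2.2.1 s.2.2.2
        = ∑' (k : ℕ) (i : Fin d) (j : {j : Fin d → ℤ // j ≠ 0}) (t : ℕ), FF j k i t := by
      rw [ENNReal.tsum_prod']
      calc ∑' (j : {j : Fin d → ℤ // j ≠ 0}) (z : ℕ × Fin d × ℕ), FF j z.1 z.2.1 z.2.2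
          = ∑' (j : {j : Fin d → ℤ // j ≠ 0}) (k : ℕ) (w : Fin d × ℕ), FF j k w.1 w.2 := by
            refine tsum_congr fun j => ?_
            rw [ENNReal.tsum_prod']
      _ = ∑' (j : {j : Fin d → ℤ // j ≠ 0}) (k : ℕ) (i : Fin d) (t : ℕ), FF j k i t := by
            refine tsum_congr fun j => tsum_congr fun k => ?_
            rw [ENNReal.tsum_prod']
      _ = ∑' (k : ℕ) (j : {j : Fin d → ℤ // j ≠ 0}) (i : Fin d) (t : ℕ), FF j k i t :=
            ENNReal.tsum_comm
      _ = ∑' (k : ℕ) (i : Fin d) (j : {j : Fin d → ℤ // j ≠ 0}) (t : ℕ), FF j k i t :=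
            tsum_congr fun k => ENNReal.tsum_comm
    -- inner bound for fixed (k, i)
    have hinner : ∀ (k : ℕ) (i : Fin d),
        ∑' (j : {j : Fin d → ℤ // j ≠ 0}) (t : ℕ), FF j k i t
          ≤ ((2 ^ ((k+4)*d) * m : ℕ) : ℝ≥0∞) * wbar k := by
      intro k i
      have hj : ∀ j : {j : Fin d → ℤ // j ≠ 0},
          ∑' (t : ℕ), FF j k i t ≤ (if j.1 ∈ JJ k i b then wbar k else 0) := by
        intro j
        set t0 : ℕ := (b i).natAbs - ((H^[k+1] j.1) i).natAbs with ht0def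
        have huniq : ∀ t, t ≠ t0 → FF j k i t = 0 := by
          intro t ht
          rw [hFFdef]
          by_cases hc : ψ (j, (k, (i, t))) = qq ∧ valid j.1 (k, (i, t))
          · exfalso
            apply ht
            have hbp : bpt j.1 (k, (i, t)) = b := (psi_spec hc.2 hc.1).2
            exact t_unique hc.2 hbp
          · exact if_neg hc
        rw [tsum_eq_single t0 huniq]
        by_cases hc : ψ (j, (k, (i, t0))) = qq ∧ valid j.1 (k, (i, t0))
        · have hv := hc.2
          have hbp : bpt j.1 (k, (i, t0)) = b := (psi_spec hv hc.1).2
          have hmem : j.1 ∈ JJ k i b := mem_JJ (z := (k, (i, t0))) hv hbp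
          rw [hFFdef]
          simp only [if_pos hc, if_pos hmem]
          rw [hwbardef]
          have h1 : ((nsup j.1 : ℝ≥0∞)) ^ (-(1+β)) ≤ (((2^k * m : ℕ) : ℝ≥0∞)) ^ (-(1+β)) := by
            rw [ENNReal.rpow_neg, ENNReal.rpow_neg]
            apply ENNReal.inv_le_inv.mpr
            apply ENNReal.rpow_le_rpow _ (by linarith)
            exact_mod_cast R_lb hv hbp
          have h2 : ((rho j.1 k : ℝ≥0∞)) ^ β ≤ ((m:ℝ≥0∞)) ^ β := by
            apply ENNReal.rpow_le_rpow _ hβ0.le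
            exact_mod_cast rho_le_m hv hbp
          exact mul_le_mul' (mul_le_mul' h1 h2) (le_refl GG)
        · rw [hFFdef]
          simp only [if_neg hc]
          exact zero_le
      calc ∑' (j : {j : Fin d → ℤ // j ≠ 0}) (t : ℕ), FF j k i t
          ≤ ∑' (j : {j : Fin d → ℤ // j ≠ 0}), (if j.1 ∈ JJ k i b then wbar k else 0) :=
            ENNReal.tsum_le_tsum hj
      _ ≤ ∑' (x : Fin d → ℤ), (if x ∈ JJ k i b then wbar k else 0) :=
            Summable.tsum_le_tsum_of_inj Subtype.val Subtype.val_injective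
              (fun _ _ => zero_le) (fun s => le_refl _) ENNReal.summable ENNReal.summable
      _ = ∑ x ∈ JJ k i b, (if x ∈ JJ k i b then wbar k else 0) :=
            tsum_eq_sum (fun x hx => if_neg hx)
      _ = ∑ _x ∈ JJ k i b, wbar k := Finset.sum_congr rfl fun x hx => if_pos hx
      _ = ((JJ k i b).card : ℝ≥0∞) * wbar k := by rw [Finset.sum_const, nsmul_eq_mul]
      _ ≤ ((2 ^ ((k+4)*d) * m : ℕ) : ℝ≥0∞) * wbar k := by
            apply mul_le_mul_left
            exact_mod_cast card_JJ k i b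
    -- per-k closed form
    have hkform : ∀ k : ℕ,
        ((2 ^ ((k+4)*d) * m : ℕ) : ℝ≥0∞) * wbar k = (2:ℝ≥0∞)^(4*d) * rr2^k * GG := by
      intro k
      simp only [hwbardef]
      have hc1 : ((2 ^ ((k+4)*d) * m : ℕ) : ℝ≥0∞) = (2:ℝ≥0∞)^((k+4)*d) * (m:ℝ≥0∞) := by
        push_cast; ring
      have hc2 : (((2^k * m : ℕ) : ℝ≥0∞)) ^ (-(1+β))
          = ((2:ℝ≥0∞)^k) ^ (-(1+β)) * ((m:ℝ≥0∞)) ^ (-(1+β)) := by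
        have : (((2^k * m : ℕ) : ℝ≥0∞)) = (2:ℝ≥0∞)^k * (m:ℝ≥0∞) := by push_cast; ring
        rw [this, ENNReal.mul_rpow_of_ne_top (by simp) hmnetop]
      rw [hc1, hc2]
      have hmpart : (m:ℝ≥0∞) * ((m:ℝ≥0∞)) ^ (-(1+β)) * ((m:ℝ≥0∞)) ^ β = 1 := by
        nth_rewrite 1 [← ENNReal.rpow_one ((m:ℝ≥0∞))]
        rw [← ENNReal.rpow_add _ _ hmne0 hmnetop, ← ENNReal.rpow_add _ _ hmne0 hmnetop,
          show (1:ℝ) + -(1+β) + β = 0 by ring, ENNReal.rpow_zero]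
      have h2part : (2:ℝ≥0∞)^((k+4)*d) * ((2:ℝ≥0∞)^k) ^ (-(1+β))
          = (2:ℝ≥0∞)^(4*d) * rr2^k := by
        have e1 : (2:ℝ≥0∞)^((k+4)*d) = (2:ℝ≥0∞) ^ ((((k+4)*d : ℕ)) : ℝ) :=
          (ENNReal.rpow_natCast 2 ((k+4)*d)).symm
        have e2 : ((2:ℝ≥0∞)^k) ^ (-(1+β)) = (2:ℝ≥0∞) ^ ((k:ℝ) * (-(1+β))) := by
          rw [← ENNReal.rpow_natCast 2 k, ← ENNReal.rpow_mul]
        have e3 : (2:ℝ≥0∞)^(4*d) = (2:ℝ≥0∞) ^ (((4*d : ℕ)) : ℝ) :=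
          (ENNReal.rpow_natCast 2 (4*d)).symm
        have e4 : rr2^k = (2:ℝ≥0∞) ^ (((d:ℝ) - 1 - β) * (k:ℝ)) := by
          rw [hrr2def, ← ENNReal.rpow_natCast ((2:ℝ≥0∞) ^ ((d:ℝ) - 1 - β)) k,
            ← ENNReal.rpow_mul]
        rw [e1, e2, e3, e4, ← ENNReal.rpow_add _ _ (by norm_num) (by norm_num),
          ← ENNReal.rpow_add _ _ (by norm_num) (by norm_num)]
        congr 1
        push_cast
        ring
      calc (2:ℝ≥0∞)^((k+4)*d) * (m:ℝ≥0∞) *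
            (((2:ℝ≥0∞)^k) ^ (-(1+β)) * ((m:ℝ≥0∞)) ^ (-(1+β)) * ((m:ℝ≥0∞)) ^ β * GG)
          = ((2:ℝ≥0∞)^((k+4)*d) * ((2:ℝ≥0∞)^k) ^ (-(1+β))) *
            ((m:ℝ≥0∞) * ((m:ℝ≥0∞)) ^ (-(1+β)) * ((m:ℝ≥0∞)) ^ β) * GG := by ring
      _ = (2:ℝ≥0∞)^(4*d) * rr2^k * GG := by rw [hmpart, h2part, mul_one]
    -- sum up
    calc ∑' (s : {s // ψ s = qq}), Φ s.1
        ≤ ∑' (s : {j : Fin d → ℤ // j ≠ 0} × (ℕ × Fin d × ℕ)), FF s.1 s.2.1 s.2.2.1 s.2.2.2 := hsub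
    _ = ∑' (k : ℕ) (i : Fin d) (j : {j : Fin d → ℤ // j ≠ 0}) (t : ℕ), FF j k i t := hexpand
    _ ≤ ∑' (k : ℕ) (i : Fin d), ((2 ^ ((k+4)*d) * m : ℕ) : ℝ≥0∞) * wbar k :=
          ENNReal.tsum_le_tsum fun k => ENNReal.tsum_le_tsum fun i => hinner k i
    _ = ∑' (k : ℕ), (d : ℝ≥0∞) * (((2 ^ ((k+4)*d) * m : ℕ) : ℝ≥0∞) * wbar k) := by
          refine tsum_congr fun k => ?_
          rw [tsum_fintype, Finset.sum_const, Finset.card_univ, Fintype.card_fin, nsmul_eq_mul]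
    _ = ∑' (k : ℕ), (d : ℝ≥0∞) * ((2:ℝ≥0∞)^(4*d) * rr2^k * GG) := by
          refine tsum_congr fun k => ?_
          rw [hkform k]
    _ = (d : ℝ≥0∞) * (2:ℝ≥0∞)^(4*d) * GG * ∑' (k : ℕ), rr2^k := by
          rw [← ENNReal.tsum_mul_left]
          refine tsum_congr fun k => by ring
    _ = (d : ℝ≥0∞) * (2:ℝ≥0∞)^(4*d) * GG * (1 - rr2)⁻¹ := by rw [ENNReal.tsum_geometric]
    _ = C5 * GG := by rw [hC5def]; ring
  -- Step 4: conclude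
  have hrhs : ∑' (qq : Q), G u p qq.1.1 qq.2.1
      = ∑' (j : {j : Fin d → ℤ // j ≠ 0}) (k : {k : Fin d → ℤ // nbrZ j.1 k}),
          ENNReal.ofReal (‖u j.1 - u k.1‖ ^ p) :=
    ENNReal.tsum_sigma (fun (a : {j : Fin d → ℤ // j ≠ 0}) (b : {k : Fin d → ℤ // nbrZ a.1 k}) =>
      ENNReal.ofReal (‖u a.1 - u b.1‖ ^ p))
  calc (∑' (j : {j : Fin d → ℤ // j ≠ 0}),
      ENNReal.ofReal (‖u j.1‖ ^ p / zsup j.1 ^ p))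
      ≤ C7 * ∑' (s : {j : Fin d → ℤ // j ≠ 0} × (ℕ × Fin d × ℕ)), Φ s := step1
  _ = C7 * ∑' (qq : Q), ∑' (s : {s // ψ s = qq}), Φ s.1 := by rw [fib]
  _ ≤ C7 * ∑' (qq : Q), C5 * G u p qq.1.1 qq.2.1 :=
        mul_le_mul_right (ENNReal.tsum_le_tsum fiberB) _
  _ = C7 * (C5 * ∑' (qq : Q), G u p qq.1.1 qq.2.1) := by rw [ENNReal.tsum_mul_left]
  _ = (C7 * C5) * ∑' (qq : Q), G u p qq.1.1 qq.2.1 := by ring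
  _ = (C7 * C5) * ∑' (j : {j : Fin d → ℤ // j ≠ 0}) (k : {k : Fin d → ℤ // nbrZ j.1 k}),
        ENNReal.ofReal (‖u j.1 - u k.1‖ ^ p) := by rw [hrhs]
end

section
/- Let 0 < s, p < ∞ with sp = d, and let ε > 0. Then there exists a constant c = c(d, s, p, ε) < ∞ such that for every function u : ℤ₊^d → ℂ with u(0) = 0, one has ∑_{j ∈ ℤ₊^d \ {0}} |u(j)|^p / ‖j‖_∞^{sp+ε} ≤ c · ∑_{j ∈ ℤ₊^d} ∑_{m ∈ ℤ₊^d, m ≠ j} |u(j) − u(m)|^p / ‖j − m‖_∞^{sp+d+ε} ≤ c · ∑_{j ∈ ℤ₊^d} ∑_{m ∈ ℤ₊^d, m ≠ j} |u(j) − u(m)|^p / ‖j − m‖_∞^{sp+d}. -/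
open scoped ENNReal
open Finset

/-- The sup-norm `‖x‖_∞` of a point of `ℤ₊^d`, as a real number. -/
noncomputable def nsup {d : ℕ} (x : Fin d → ℕ) : ℝ := ((Finset.univ.sup x : ℕ) : ℝ)

/-- The sup-norm `‖j - m‖_∞` of the difference of two points of `ℤ₊^d`, as a real number. -/
noncomputable def ndist {d : ℕ} (j m : Fin d → ℕ) : ℝ :=
  ((Finset.univ.sup fun i => ((j i : ℤ) - (m i : ℤ)).natAbs : ℕ) : ℝ)

section AuxHardy

lemma aux_rpow_add_le (p : ℝ) (hp : 0 < p) {a b : ℝ} (ha : 0 ≤ a) (hb : 0 ≤ b) :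
    (a + b) ^ p ≤ 2 ^ p * (a ^ p + b ^ p) := by
  have hmax : a + b ≤ 2 * max a b := by
    rcases le_total a b with h | h
    · rw [max_eq_right h]; linarith
    · rw [max_eq_left h]; linarith
  have h0 : (0:ℝ) ≤ max a b := le_max_of_le_left ha
  calc (a + b) ^ p ≤ (2 * max a b) ^ p :=
        Real.rpow_le_rpow (by linarith) hmax hp.le
    _ = 2 ^ p * (max a b) ^ p := Real.mul_rpow (by norm_num) h0
    _ ≤ 2 ^ p * (a ^ p + b ^ p) := by
        have : (max a b) ^ p ≤ a ^ p + b ^ p := by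
          rcases le_total a b with h | h
          · rw [max_eq_right h]
            have := Real.rpow_nonneg ha p; linarith
          · rw [max_eq_left h]
            have := Real.rpow_nonneg hb p; linarith
        have h2 : (0:ℝ) ≤ 2 ^ p := Real.rpow_nonneg (by norm_num) p
        nlinarith [Real.rpow_nonneg h0 p]

lemma aux_telescope (n M : ℕ) (hn : 1 ≤ n) :
    ∑ R ∈ Finset.Ico n (n + M), ((R : ℝ) * (R + 1))⁻¹ = (n : ℝ)⁻¹ - ((n + M : ℕ) : ℝ)⁻¹ := by
  induction M with
  | zero => simp
  | succ M ih =>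
      rw [show n + (M+1) = (n + M) + 1 by ring, Finset.sum_Ico_succ_top (by omega), ih]
      have h1 : (0:ℝ) < (n:ℝ) + M := by positivity
      have h2 : (0:ℝ) < (n:ℝ) + M + 1 := by linarith
      push_cast
      field_simp
      ring

lemma aux_inv_sq_sum (n N : ℕ) (hn : 1 ≤ n) :
    ∑ R ∈ Finset.Icc n N, ((R : ℝ) ^ 2)⁻¹ ≤ 2 / n := by
  have hsub : Finset.Icc n N ⊆ Finset.Ico n (n + (N + 1 - n)) := by
    intro x hx; simp only [Finset.mem_Icc] at hx; simp only [Finset.mem_Ico]; omega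
  have h1 : ∑ R ∈ Finset.Icc n N, ((R : ℝ) ^ 2)⁻¹
      ≤ ∑ R ∈ Finset.Ico n (n + (N + 1 - n)), 2 * ((R : ℝ) * (R + 1))⁻¹ := by
    refine le_trans (Finset.sum_le_sum ?_) (Finset.sum_le_sum_of_subset_of_nonneg hsub ?_)
    · intro R hR
      simp only [Finset.mem_Icc] at hR
      have hR1 : (1:ℝ) ≤ (R:ℝ) := by exact_mod_cast le_trans hn hR.1
      rw [inv_eq_one_div, show (2:ℝ) * ((R:ℝ) * (R+1))⁻¹ = 2 / ((R:ℝ)*(R+1)) by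
        rw [div_eq_mul_inv], div_le_div_iff₀ (by positivity) (by positivity)]
      nlinarith
    · intro R _ _; positivity
  rw [← Finset.mul_sum, aux_telescope n _ hn] at h1
  have h2 : (0:ℝ) ≤ ((n + (N + 1 - n) : ℕ) : ℝ)⁻¹ := by positivity
  have hn0 : (0:ℝ) < (n:ℝ) := by exact_mod_cast hn
  calc ∑ R ∈ Finset.Icc n N, ((R : ℝ) ^ 2)⁻¹ ≤ 2 * ((n:ℝ)⁻¹ - ((n + (N + 1 - n) : ℕ) : ℝ)⁻¹) := h1
    _ ≤ 2 * (n:ℝ)⁻¹ := by nlinarith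
    _ = 2 / n := by rw [div_eq_mul_inv]

lemma aux_pow_shell (d R : ℕ) : (R + 1) ^ d ≤ R ^ d + d * (R + 1) ^ (d - 1) := by
  induction d with
  | zero => simp
  | succ d ih =>
      rcases Nat.eq_zero_or_pos d with hd | hd
      · subst hd; simp
      · have h1 : (R + 1) ^ (d + 1) = (R + 1) ^ d * (R + 1) := by ring
        have h2 : (R + 1) ^ d * (R + 1) ≤ (R ^ d + d * (R + 1) ^ (d - 1)) * (R + 1) :=
          Nat.mul_le_mul_right _ ih
        have h3 : (d - 1) + 1 = d := by omega
        have h4 : (R ^ d + d * (R + 1) ^ (d - 1)) * (R + 1)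
            = R ^ d * R + R ^ d + d * ((R + 1) ^ (d - 1) * (R + 1)) := by ring
        have h5 : (R + 1) ^ (d - 1) * (R + 1) = (R + 1) ^ d := by
          rw [← pow_succ, h3]
        have h6 : R ^ d ≤ (R + 1) ^ d := Nat.pow_le_pow_left (by omega) d
        have h7 : R ^ d * R = R ^ (d + 1) := by ring
        calc (R + 1) ^ (d + 1) = (R + 1) ^ d * (R + 1) := h1
          _ ≤ R ^ d * R + R ^ d + d * ((R + 1) ^ (d - 1) * (R + 1)) := by rw [← h4]; exact h2
          _ = R ^ (d + 1) + R ^ d + d * (R + 1) ^ d := by rw [h5, h7]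
          _ ≤ R ^ (d + 1) + (d + 1) * (R + 1) ^ d := by
              rw [Nat.succ_mul]; omega
          _ = R ^ (d + 1) + (d + 1) * (R + 1) ^ (d + 1 - 1) := by norm_num

def boxF (d k : ℕ) : Finset (Fin d → ℕ) := Fintype.piFinset fun _ => Finset.range (k+1)

lemma mem_boxF {d k : ℕ} {j : Fin d → ℕ} : j ∈ boxF d k ↔ Finset.univ.sup j ≤ k := by
  simp [boxF, Fintype.mem_piFinset, Finset.sup_le_iff, Nat.lt_succ_iff]

lemma card_boxF (d k : ℕ) : (boxF d k).card = (k+1)^d := by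
  simp [boxF, Fintype.card_piFinset]

lemma sup_pos_of_ne {d : ℕ} {j : Fin d → ℕ} (h : j ≠ 0) : 1 ≤ Finset.univ.sup j := by
  by_contra hc
  push_neg at hc
  apply h
  funext i
  have := Finset.le_sup (f := j) (Finset.mem_univ i)
  have : j i = 0 := by omega
  simpa using this

lemma nsup_def {d : ℕ} (x : Fin d → ℕ) : nsup x = ((Finset.univ.sup x : ℕ) : ℝ) := rfl

lemma one_le_nsup {d : ℕ} {j : Fin d → ℕ} (h : j ≠ 0) : (1:ℝ) ≤ nsup j := by
  rw [nsup_def]; exact_mod_cast sup_pos_of_ne h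

lemma card_shell {d R : ℕ} (hR : 1 ≤ R) (s : Finset (Fin d → ℕ)) :
    (s.filter (fun j => Finset.univ.sup j = R)).card ≤ d * (R+1)^(d-1) := by
  have hsub : (s.filter (fun j => Finset.univ.sup j = R)) ⊆ boxF d R \ boxF d (R-1) := by
    intro j hj
    rw [Finset.mem_filter] at hj
    rw [Finset.mem_sdiff, mem_boxF, mem_boxF, hj.2]
    constructor
    · omega
    · omega
  have h1 : (s.filter (fun j => Finset.univ.sup j = R)).card ≤ (boxF d R \ boxF d (R-1)).card :=
    Finset.card_le_card hsub
  have hss : boxF d (R-1) ⊆ boxF d R := by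
    intro j hj; rw [mem_boxF] at *; omega
  rw [Finset.card_sdiff_of_subset hss, card_boxF, card_boxF] at h1
  have h2 := aux_pow_shell d R
  have h3 : (R - 1 + 1) = R := by omega
  rw [h3] at h1
  omega

def NdN {d : ℕ} (j m : Fin d → ℕ) : ℕ :=
  Finset.univ.sup fun i => ((j i : ℤ) - (m i : ℤ)).natAbs

lemma ndist_def {d : ℕ} (j m : Fin d → ℕ) : ndist j m = (NdN j m : ℝ) := rfl

lemma one_le_NdN {d : ℕ} {j m : Fin d → ℕ} (h : m ≠ j) : 1 ≤ NdN j m := by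
  have : ∃ i, j i ≠ m i := by
    by_contra hc; push_neg at hc; exact h (funext fun i => (hc i).symm)
  obtain ⟨i, hi⟩ := this
  have h1 : 1 ≤ ((j i : ℤ) - (m i : ℤ)).natAbs := by omega
  exact le_trans h1 (Finset.le_sup (f := fun i => ((j i : ℤ) - (m i : ℤ)).natAbs) (Finset.mem_univ i))

lemma NdN_le {d R : ℕ} {j m : Fin d → ℕ} (hj : Finset.univ.sup j ≤ R)
    (hm : Finset.univ.sup m ≤ R) : NdN j m ≤ R := by
  apply Finset.sup_le
  intro i _
  have h1 : j i ≤ R := le_trans (Finset.le_sup (Finset.mem_univ i)) hj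
  have h2 : m i ≤ R := le_trans (Finset.le_sup (Finset.mem_univ i)) hm
  omega

end AuxHardy

lemma Lpt (d : ℕ) (p ε δ : ℝ) (hp : 0 < p) (hε : 0 < ε)
    (hδ : 0 < δ) (hδ1 : δ < 1) (u : (Fin d → ℕ) → ℂ) (j : Fin d → ℕ) (hj : j ≠ 0) :
    ‖u j‖ ^ p / nsup j ^ ((d:ℝ) + ε)
      ≤ (2^p * (δ^d)⁻¹) * (∑ m ∈ boxF d (⌊δ * nsup j⌋₊),
            ‖u j - u m‖ ^ p / ndist j m ^ ((d:ℝ) + d + ε))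
        + (2^p * (δ^d)⁻¹) * (nsup j ^ ((d:ℝ) + d + ε))⁻¹ *
            ∑ m ∈ boxF d (⌊δ * nsup j⌋₊), ‖u m‖ ^ p := by
  have hR1 : 1 ≤ Finset.univ.sup j := sup_pos_of_ne hj
  set R : ℕ := Finset.univ.sup j with hRdef
  set Rr : ℝ := nsup j with hRrdef
  have hRrR : Rr = (R : ℝ) := rfl
  have hRr1 : (1:ℝ) ≤ Rr := by rw [hRrR]; exact_mod_cast hR1
  have hRr0 : (0:ℝ) < Rr := lt_of_lt_of_le one_pos hRr1
  set k : ℕ := ⌊δ * Rr⌋₊ with hkdef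
  have hk1 : (k:ℝ) ≤ δ * Rr := Nat.floor_le (by positivity)
  have hk2 : δ * Rr ≤ (k:ℝ) + 1 := le_of_lt (Nat.lt_floor_add_one _)
  have hkR : k < R := by
    have h1 : (k:ℝ) < Rr := lt_of_le_of_lt hk1 (by nlinarith)
    rw [hRrR] at h1; exact_mod_cast h1
  set e : ℝ := (d:ℝ) + d + ε with hedef
  have he0 : 0 ≤ e := by positivity
  set dε : ℝ := (d:ℝ) + ε with hdεdef
  have hdε0 : (0:ℝ) < Rr ^ dε := Real.rpow_pos_of_pos hRr0 _
  have hre : (0:ℝ) < Rr ^ e := Real.rpow_pos_of_pos hRr0 _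
  set Q : Finset (Fin d → ℕ) := boxF d k with hQdef
  set A : ℝ := ∑ m ∈ Q, ‖u j - u m‖ ^ p / ndist j m ^ e with hAdef
  set B : ℝ := ∑ m ∈ Q, ‖u m‖ ^ p with hBdef
  have hA : 0 ≤ A := Finset.sum_nonneg fun m _ =>
    div_nonneg (Real.rpow_nonneg (norm_nonneg _) _)
      (Real.rpow_nonneg (by rw [ndist_def]; positivity) _)
  have hB : 0 ≤ B := Finset.sum_nonneg fun m _ =>
    Real.rpow_nonneg (norm_nonneg _) _
  set c1 : ℝ := 2^p * (δ^d)⁻¹ with hc1def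
  have h2p : (0:ℝ) < 2^p := Real.rpow_pos_of_pos two_pos _
  have hc1 : 0 < c1 := by positivity
  have hkpos : (0:ℝ) < (k:ℝ) + 1 := by positivity
  -- core
  have hcore : Rr ^ (d:ℕ) ≤ (δ⁻¹)^d * ((k:ℝ)+1)^d := by
    have h1 : Rr ≤ δ⁻¹ * ((k:ℝ)+1) := by
      have h2 : Rr ≤ ((k:ℝ)+1)/δ := (le_div_iff₀ hδ).2 (by linarith)
      calc Rr ≤ ((k:ℝ)+1)/δ := h2
        _ = δ⁻¹ * ((k:ℝ)+1) := by rw [div_eq_inv_mul]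
    calc Rr ^ (d:ℕ) ≤ (δ⁻¹ * ((k:ℝ)+1))^(d:ℕ) := pow_le_pow_left₀ (le_of_lt hRr0) h1 d
      _ = (δ⁻¹)^d * ((k:ℝ)+1)^d := mul_pow _ _ _
  have hmain : 2^p * Rr ^ e ≤ c1 * (((k:ℝ)+1)^d * Rr ^ dε) := by
    have hsplit : Rr ^ e = Rr ^ (d:ℕ) * Rr ^ dε := by
      rw [hedef, hdεdef, show (d:ℝ) + d + ε = (d:ℝ) + ((d:ℝ) + ε) by ring,
        Real.rpow_add hRr0, Real.rpow_natCast]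
    rw [hsplit, hc1def]
    calc 2^p * (Rr ^ (d:ℕ) * Rr ^ dε) ≤ 2^p * (((δ⁻¹)^d * ((k:ℝ)+1)^d) * Rr ^ dε) := by
          apply mul_le_mul_of_nonneg_left _ (le_of_lt h2p)
          exact mul_le_mul_of_nonneg_right hcore (le_of_lt hdε0)
      _ = 2^p * (δ^d)⁻¹ * (((k:ℝ)+1)^d * Rr ^ dε) := by
          rw [inv_pow]; ring
  -- pointwise triangle
  have hgj : ∀ m ∈ Q, ‖u j‖ ^ p
      ≤ 2^p * (‖u j - u m‖ ^ p + ‖u m‖ ^ p) := by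
    intro m _
    have htri : ‖u j‖ ≤ ‖u j - u m‖ + ‖u m‖ := by
      calc ‖u j‖ = ‖(u j - u m) + u m‖ := by rw [sub_add_cancel]
        _ ≤ _ := norm_add_le _ _
    calc ‖u j‖ ^ p ≤ (‖u j - u m‖ + ‖u m‖) ^ p :=
          Real.rpow_le_rpow (norm_nonneg _) htri hp.le
      _ ≤ _ := aux_rpow_add_le p hp (norm_nonneg _) (norm_nonneg _)
  -- difference bound
  have hΔ : ∀ m ∈ Q, ‖u j - u m‖ ^ p
      ≤ (‖u j - u m‖ ^ p / ndist j m ^ e) * Rr ^ e := by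
    intro m hm
    have hmk : Finset.univ.sup m ≤ k := mem_boxF.1 hm
    have hmj : m ≠ j := by
      intro hcontra
      rw [hcontra] at hmk; omega
    have hnd1 : (1:ℝ) ≤ ndist j m := by
      rw [ndist_def]; exact_mod_cast one_le_NdN hmj
    have hndR : ndist j m ≤ Rr := by
      rw [ndist_def, hRrR]
      exact_mod_cast NdN_le (le_refl R) (le_trans hmk (le_of_lt hkR))
    have hnde : (0:ℝ) < ndist j m ^ e := Real.rpow_pos_of_pos (by linarith) _
    have h1 : ndist j m ^ e ≤ Rr ^ e := Real.rpow_le_rpow (by linarith) hndR he0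
    calc ‖u j - u m‖ ^ p
        = (‖u j - u m‖ ^ p / ndist j m ^ e) * ndist j m ^ e := by
          rw [div_mul_cancel₀ _ (ne_of_gt hnde)]
      _ ≤ _ := mul_le_mul_of_nonneg_left h1 (div_nonneg (Real.rpow_nonneg (norm_nonneg _) _) (le_of_lt hnde))
  -- summed bound
  have hsum : ‖u j‖ ^ p * ((k:ℝ)+1)^d ≤ 2^p * (Rr ^ e * A) + 2^p * B := by
    have h1 : ‖u j‖ ^ p * ((k:ℝ)+1)^d = ∑ _m ∈ Q, ‖u j‖ ^ p := by
      rw [Finset.sum_const, hQdef, card_boxF, nsmul_eq_mul]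
      push_cast
      ring
    rw [h1]
    calc ∑ m ∈ Q, ‖u j‖ ^ p
        ≤ ∑ m ∈ Q, 2^p * (‖u j - u m‖ ^ p + ‖u m‖ ^ p) :=
          Finset.sum_le_sum hgj
      _ = 2^p * (∑ m ∈ Q, ‖u j - u m‖ ^ p) + 2^p * B := by
          rw [hBdef]
          simp only [mul_add, Finset.sum_add_distrib, Finset.mul_sum]
      _ ≤ 2^p * (∑ m ∈ Q, (‖u j - u m‖ ^ p / ndist j m ^ e) * Rr ^ e) + 2^p * B := by
          have h := Finset.sum_le_sum hΔ
          have h2 := mul_le_mul_of_nonneg_left h (le_of_lt h2p)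
          linarith
      _ = 2^p * (Rr ^ e * A) + 2^p * B := by
          rw [hAdef, ← Finset.sum_mul]
          ring
  -- conclude
  rw [div_le_iff₀ hdε0]
  have hfin : ‖u j‖ ^ p * ((k:ℝ)+1)^d
      ≤ ((c1 * A + c1 * (Rr ^ e)⁻¹ * B) * Rr ^ dε) * ((k:ℝ)+1)^d := by
    have hka : 2^p * (Rr ^ e * A) ≤ c1 * A * Rr ^ dε * ((k:ℝ)+1)^d := by
      have h := mul_le_mul_of_nonneg_right hmain hA
      calc 2^p * (Rr ^ e * A) = 2^p * Rr ^ e * A := by ring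
        _ ≤ c1 * (((k:ℝ)+1)^d * Rr ^ dε) * A := h
        _ = c1 * A * Rr ^ dε * ((k:ℝ)+1)^d := by ring
    have hkb : 2^p * B ≤ c1 * (Rr ^ e)⁻¹ * B * Rr ^ dε * ((k:ℝ)+1)^d := by
      have h1 := mul_le_mul_of_nonneg_right hmain
        (mul_nonneg (inv_nonneg.2 (le_of_lt hre)) hB)
      have h2 : Rr ^ e * (Rr ^ e)⁻¹ = 1 := mul_inv_cancel₀ (ne_of_gt hre)
      calc 2^p * B = 2^p * B * (Rr ^ e * (Rr ^ e)⁻¹) := by rw [h2, mul_one]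
        _ = 2^p * Rr ^ e * ((Rr ^ e)⁻¹ * B) := by ring
        _ ≤ c1 * (((k:ℝ)+1)^d * Rr ^ dε) * ((Rr ^ e)⁻¹ * B) := h1
        _ = c1 * (Rr ^ e)⁻¹ * B * Rr ^ dε * ((k:ℝ)+1)^d := by ring
    calc ‖u j‖ ^ p * ((k:ℝ)+1)^d ≤ 2^p * (Rr ^ e * A) + 2^p * B := hsum
      _ ≤ c1 * A * Rr ^ dε * ((k:ℝ)+1)^d + c1 * (Rr ^ e)⁻¹ * B * Rr ^ dε * ((k:ℝ)+1)^d := by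
          linarith
      _ = ((c1 * A + c1 * (Rr ^ e)⁻¹ * B) * Rr ^ dε) * ((k:ℝ)+1)^d := by ring
  exact le_of_mul_le_mul_right hfin (pow_pos hkpos d)

lemma LX (d : ℕ) (p ε δ : ℝ) (hd : 1 ≤ d) (hp : 0 < p) (hε : 0 < ε) (hδ : 0 < δ)
    (hδ1 : δ < 1) (u : (Fin d → ℕ) → ℂ) (hu0 : u 0 = 0) (N : ℕ) :
    ∑ j ∈ (boxF d N).filter (fun j => j ≠ 0),
        (nsup j ^ ((d:ℝ) + d + ε))⁻¹ * ∑ m ∈ boxF d ⌊δ * nsup j⌋₊, ‖u m‖ ^ p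
      ≤ ((d:ℝ) * 2^d * δ ^ ((d:ℝ) + ε)) *
        ∑ m ∈ (boxF d N).filter (fun m => m ≠ 0),
          ‖u m‖ ^ p / nsup m ^ ((d:ℝ) + ε) := by
  classical
  set e : ℝ := (d:ℝ) + d + ε with hedef
  set dε : ℝ := (d:ℝ) + ε with hdεdef
  set a : ℝ := (d:ℝ) - 1 + ε with hadef
  have hd0 : (0:ℝ) < d := by exact_mod_cast hd
  have ha0 : 0 ≤ a := by
    rw [hadef]
    have h1d : (1:ℝ) ≤ d := by exact_mod_cast hd
    linarith
  set S : Finset (Fin d → ℕ) := (boxF d N).filter (fun j => j ≠ 0) with hSdef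
  set B : Finset (Fin d → ℕ) := boxF d N with hBdef
  set g : (Fin d → ℕ) → ℝ := fun m => ‖u m‖ ^ p with hgdef
  have hg0 : ∀ m, 0 ≤ g m := fun m => Real.rpow_nonneg (norm_nonneg _) _
  have hgzero : g 0 = 0 := by
    rw [hgdef]; simp only [hu0, norm_zero]; exact Real.zero_rpow (ne_of_gt hp)
  set coeff : (Fin d → ℕ) → ℝ := fun j => (nsup j ^ e)⁻¹ with hcoeffdef
  have hcoeff0 : ∀ j, 0 ≤ coeff j := fun j =>
    inv_nonneg.2 (Real.rpow_nonneg (Nat.cast_nonneg _) _)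
  set θ : ℝ := (d:ℝ) * 2^d * δ ^ dε with hθdef
  -- step 1 : rewrite inner sums and swap
  have hkltR : ∀ j ∈ S, ⌊δ * nsup j⌋₊ < Finset.univ.sup j := by
    intro j hj
    rw [hSdef, Finset.mem_filter] at hj
    have hR1 : 1 ≤ Finset.univ.sup j := sup_pos_of_ne hj.2
    have hRr1 : (1:ℝ) ≤ nsup j := one_le_nsup hj.2
    have h1 : (⌊δ * nsup j⌋₊ : ℝ) ≤ δ * nsup j := Nat.floor_le (by positivity)
    have h2 : δ * nsup j < nsup j := by nlinarith
    have h3 : ((⌊δ * nsup j⌋₊ : ℕ) : ℝ) < ((Finset.univ.sup j : ℕ) : ℝ) := by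
      calc ((⌊δ * nsup j⌋₊ : ℕ) : ℝ) ≤ δ * nsup j := h1
        _ < nsup j := h2
    exact_mod_cast h3
  have hQeq : ∀ j ∈ S, boxF d ⌊δ * nsup j⌋₊ = B.filter (fun m => Finset.univ.sup m ≤ ⌊δ * nsup j⌋₊) := by
    intro j hj
    have hkN : ⌊δ * nsup j⌋₊ ≤ N := by
      have h1 := hkltR j hj
      have h2 : Finset.univ.sup j ≤ N := by
        rw [hSdef, Finset.mem_filter] at hj
        exact mem_boxF.1 hj.1
      omega
    ext m
    rw [mem_boxF, hBdef, Finset.mem_filter, mem_boxF]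
    constructor
    · intro h; exact ⟨le_trans h hkN, h⟩
    · intro h; exact h.2
  have hswap :
      ∑ j ∈ S, coeff j * ∑ m ∈ boxF d ⌊δ * nsup j⌋₊, g m
        = ∑ m ∈ B, (∑ j ∈ S.filter (fun j => Finset.univ.sup m ≤ ⌊δ * nsup j⌋₊), coeff j) * g m := by
    have h1 : ∀ j ∈ S, coeff j * ∑ m ∈ boxF d ⌊δ * nsup j⌋₊, g m
        = ∑ m ∈ B, (if Finset.univ.sup m ≤ ⌊δ * nsup j⌋₊ then coeff j * g m else 0) := by
      intro j hj
      rw [hQeq j hj, Finset.sum_filter, Finset.mul_sum]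
      apply Finset.sum_congr rfl
      intro m _
      split <;> simp
    rw [Finset.sum_congr rfl h1, Finset.sum_comm]
    apply Finset.sum_congr rfl
    intro m _
    rw [Finset.sum_mul]
    exact (Finset.sum_filter _ _).symm
  rw [hswap]
  -- step 2 : termwise bound
  have hterm : ∀ m ∈ B,
      (∑ j ∈ S.filter (fun j => Finset.univ.sup m ≤ ⌊δ * nsup j⌋₊), coeff j) * g m
        ≤ θ * (g m / nsup m ^ dε) := by
    intro m _
    rcases eq_or_ne m 0 with hm0 | hm0
    · rw [hm0, hgzero]
      rw [mul_zero, zero_div, mul_zero]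
    · -- main bound on H m
      have hrm1 : 1 ≤ Finset.univ.sup m := sup_pos_of_ne hm0
      have hrmr1 : (1:ℝ) ≤ nsup m := one_le_nsup hm0
      have hrm0 : (0:ℝ) < nsup m := by linarith
      set n₀ : ℕ := ⌈nsup m / δ⌉₊ with hn₀def
      have hn₀1 : 1 ≤ n₀ := by
        rw [hn₀def]
        exact Nat.one_le_iff_ne_zero.2 (by
          intro hzero
          have := Nat.ceil_eq_zero.1 hzero
          have hpos : (0:ℝ) < nsup m / δ := by positivity
          linarith)
      have hn₀pos : (0:ℝ) < (n₀:ℝ) := by exact_mod_cast hn₀1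
      have hHbound :
          ∑ j ∈ S.filter (fun j => Finset.univ.sup m ≤ ⌊δ * nsup j⌋₊), coeff j
            ≤ θ * (nsup m ^ dε)⁻¹ := by
        set S' := S.filter (fun j => Finset.univ.sup m ≤ ⌊δ * nsup j⌋₊) with hS'def
        have hmaps : ∀ j ∈ S', Finset.univ.sup j ∈ Finset.Icc n₀ N := by
          intro j hj
          rw [hS'def, Finset.mem_filter] at hj
          obtain ⟨hjS, hjcond⟩ := hj
          have hjN : Finset.univ.sup j ≤ N := by
            rw [hSdef, Finset.mem_filter] at hjS
            exact mem_boxF.1 hjS.1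
          have h1 : ((Finset.univ.sup m : ℕ) : ℝ) ≤ δ * nsup j := by
            calc ((Finset.univ.sup m : ℕ) : ℝ) ≤ (⌊δ * nsup j⌋₊ : ℝ) := by exact_mod_cast hjcond
              _ ≤ δ * nsup j := Nat.floor_le (mul_nonneg (le_of_lt hδ) (by rw [nsup_def]; positivity))
          have h2 : nsup m / δ ≤ nsup j := by
            rw [div_le_iff₀ hδ, mul_comm]
            rw [nsup_def m]
            exact h1
          have h3 : n₀ ≤ Finset.univ.sup j := by
            apply Nat.ceil_le.2
            rw [← nsup_def j]
            exact h2
          exact Finset.mem_Icc.2 ⟨h3, hjN⟩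
        rw [← Finset.sum_fiberwise_of_maps_to hmaps coeff]
        have hper : ∀ R ∈ Finset.Icc n₀ N,
            ∑ j ∈ S'.filter (fun j => Finset.univ.sup j = R), coeff j
              ≤ ((d:ℝ) * 2^(d-1) * (((n₀:ℝ)) ^ a)⁻¹) * (((R:ℝ))^2)⁻¹ := by
          intro R hR
          rw [Finset.mem_Icc] at hR
          have hR1 : 1 ≤ R := le_trans hn₀1 hR.1
          have hRr1 : (1:ℝ) ≤ (R:ℝ) := by exact_mod_cast hR1
          have hRpos : (0:ℝ) < (R:ℝ) := by linarith
          have hval : ∀ j ∈ S'.filter (fun j => Finset.univ.sup j = R),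
              coeff j = (((R:ℝ))^e)⁻¹ := by
            intro j hj
            rw [Finset.mem_filter] at hj
            simp only [hcoeffdef]
            rw [nsup_def, hj.2]
          rw [Finset.sum_congr rfl hval, Finset.sum_const, nsmul_eq_mul]
          have hcard : ((S'.filter (fun j => Finset.univ.sup j = R)).card : ℝ)
              ≤ (d:ℝ) * ((R:ℝ)+1)^(d-1) := by
            have hc := card_shell hR1 S'
            calc ((S'.filter (fun j => Finset.univ.sup j = R)).card : ℝ)
                ≤ ((d * (R+1)^(d-1) : ℕ) : ℝ) := by exact_mod_cast hc
              _ = (d:ℝ) * ((R:ℝ)+1)^(d-1) := by push_cast; ring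
          have hsplit : ((R:ℝ))^e = (R:ℝ)^a * ((R:ℝ)^(2:ℕ) * (R:ℝ)^((d-1:ℕ))) := by
            rw [← Real.rpow_natCast (R:ℝ) 2, ← Real.rpow_natCast (R:ℝ) (d-1),
              ← Real.rpow_add hRpos, ← Real.rpow_add hRpos]
            congr 1
            rw [hedef, hadef, Nat.cast_sub hd]
            push_cast
            ring
          have hpow1 : ((R:ℝ)+1)^(d-1) ≤ 2^(d-1) * (R:ℝ)^(d-1) := by
            calc ((R:ℝ)+1)^(d-1) ≤ (2*(R:ℝ))^(d-1) :=
                  pow_le_pow_left₀ (by positivity) (by linarith) _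
              _ = 2^(d-1) * (R:ℝ)^(d-1) := mul_pow _ _ _
          have hre : (0:ℝ) < ((R:ℝ))^e := Real.rpow_pos_of_pos hRpos _
          have hra : (0:ℝ) < ((R:ℝ))^a := Real.rpow_pos_of_pos hRpos _
          have hna : (0:ℝ) < ((n₀:ℝ))^a := Real.rpow_pos_of_pos hn₀pos _
          have hstep : ((R:ℝ)^(d-1:ℕ)) * (((R:ℝ))^e)⁻¹ = (((R:ℝ))^a)⁻¹ * (((R:ℝ))^2)⁻¹ := by
            rw [hsplit]
            have hr2 : (0:ℝ) < (R:ℝ)^(2:ℕ) := by positivity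
            have hrd1 : (0:ℝ) < (R:ℝ)^((d-1:ℕ)) := by positivity
            field_simp
          have hinv : (((R:ℝ))^a)⁻¹ ≤ (((n₀:ℝ))^a)⁻¹ := by
            apply inv_anti₀ hna
            exact Real.rpow_le_rpow (by positivity) (by exact_mod_cast hR.1) ha0
          calc ((S'.filter (fun j => Finset.univ.sup j = R)).card : ℝ) * (((R:ℝ))^e)⁻¹
              ≤ ((d:ℝ) * ((R:ℝ)+1)^(d-1)) * (((R:ℝ))^e)⁻¹ :=
                mul_le_mul_of_nonneg_right hcard (inv_nonneg.2 (le_of_lt hre))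
            _ ≤ ((d:ℝ) * (2^(d-1) * (R:ℝ)^(d-1))) * (((R:ℝ))^e)⁻¹ := by
                apply mul_le_mul_of_nonneg_right _ (inv_nonneg.2 (le_of_lt hre))
                exact mul_le_mul_of_nonneg_left hpow1 (le_of_lt hd0)
            _ = ((d:ℝ) * 2^(d-1)) * (((R:ℝ)^(d-1:ℕ)) * (((R:ℝ))^e)⁻¹) := by ring
            _ = ((d:ℝ) * 2^(d-1)) * ((((R:ℝ))^a)⁻¹ * (((R:ℝ))^2)⁻¹) := by rw [hstep]
            _ ≤ ((d:ℝ) * 2^(d-1)) * ((((n₀:ℝ))^a)⁻¹ * (((R:ℝ))^2)⁻¹) := by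
                apply mul_le_mul_of_nonneg_left _ (by positivity)
                exact mul_le_mul_of_nonneg_right hinv (by positivity)
            _ = ((d:ℝ) * 2^(d-1) * (((n₀:ℝ)) ^ a)⁻¹) * (((R:ℝ))^2)⁻¹ := by ring
        have hsum2 : ∑ R ∈ Finset.Icc n₀ N,
            ∑ j ∈ S'.filter (fun j => Finset.univ.sup j = R), coeff j
              ≤ ((d:ℝ) * 2^(d-1) * (((n₀:ℝ)) ^ a)⁻¹) * (2 / n₀) := by
          calc ∑ R ∈ Finset.Icc n₀ N, ∑ j ∈ S'.filter (fun j => Finset.univ.sup j = R), coeff j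
              ≤ ∑ R ∈ Finset.Icc n₀ N, ((d:ℝ) * 2^(d-1) * (((n₀:ℝ)) ^ a)⁻¹) * (((R:ℝ))^2)⁻¹ :=
                Finset.sum_le_sum hper
            _ = ((d:ℝ) * 2^(d-1) * (((n₀:ℝ)) ^ a)⁻¹) * ∑ R ∈ Finset.Icc n₀ N, (((R:ℝ))^2)⁻¹ := by
                rw [Finset.mul_sum]
            _ ≤ _ := by
                apply mul_le_mul_of_nonneg_left (aux_inv_sq_sum n₀ N hn₀1) (by positivity)
        have hfinalcoef : ((d:ℝ) * 2^(d-1) * (((n₀:ℝ)) ^ a)⁻¹) * (2 / n₀)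
            ≤ θ * (nsup m ^ dε)⁻¹ := by
          have hn₀dε : ((n₀:ℝ))^dε = ((n₀:ℝ))^a * (n₀:ℝ) := by
            rw [show dε = a + 1 by rw [hadef, hdεdef]; ring, Real.rpow_add hn₀pos,
              Real.rpow_one]
          have h2pow : (2:ℝ)^(d-1) * 2 = 2^d := by
            rw [← pow_succ]
            congr 1
            omega
          have hLHS : ((d:ℝ) * 2^(d-1) * (((n₀:ℝ)) ^ a)⁻¹) * (2 / n₀)
              = (d:ℝ) * 2^d * (((n₀:ℝ))^dε)⁻¹ := by
            rw [hn₀dε, mul_inv]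
            rw [← h2pow]
            field_simp
          rw [hLHS, hθdef]
          have hceil : nsup m / δ ≤ (n₀:ℝ) := Nat.le_ceil _
          have hdiv : (0:ℝ) < nsup m ^ dε / δ ^ dε := by
            apply div_pos (Real.rpow_pos_of_pos hrm0 _) (Real.rpow_pos_of_pos hδ _)
          have h7 : nsup m ^ dε / δ ^ dε ≤ ((n₀:ℝ))^dε := by
            rw [← Real.div_rpow (by positivity) (le_of_lt hδ)]
            exact Real.rpow_le_rpow (by positivity) hceil (by rw [hdεdef]; positivity)
          have h8 : (((n₀:ℝ))^dε)⁻¹ ≤ δ ^ dε * (nsup m ^ dε)⁻¹ := by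
            calc (((n₀:ℝ))^dε)⁻¹ ≤ (nsup m ^ dε / δ ^ dε)⁻¹ := inv_anti₀ hdiv h7
              _ = δ ^ dε / nsup m ^ dε := by rw [inv_div]
              _ = δ ^ dε * (nsup m ^ dε)⁻¹ := div_eq_mul_inv _ _
          calc (d:ℝ) * 2^d * (((n₀:ℝ))^dε)⁻¹
              ≤ (d:ℝ) * 2^d * (δ ^ dε * (nsup m ^ dε)⁻¹) := by
                apply mul_le_mul_of_nonneg_left h8 (by positivity)
            _ = (d:ℝ) * 2^d * δ ^ dε * (nsup m ^ dε)⁻¹ := by ring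
        exact le_trans hsum2 hfinalcoef
      calc (∑ j ∈ S.filter (fun j => Finset.univ.sup m ≤ ⌊δ * nsup j⌋₊), coeff j) * g m
          ≤ (θ * (nsup m ^ dε)⁻¹) * g m := mul_le_mul_of_nonneg_right hHbound (hg0 m)
        _ = θ * (g m / nsup m ^ dε) := by rw [div_eq_mul_inv]; ring
  -- step 3 : conclude
  have h3 : ∑ m ∈ B, (∑ j ∈ S.filter (fun j => Finset.univ.sup m ≤ ⌊δ * nsup j⌋₊), coeff j) * g m
      ≤ θ * ∑ m ∈ B, g m / nsup m ^ dε := by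
    rw [Finset.mul_sum]
    exact Finset.sum_le_sum hterm
  have h4 : ∑ m ∈ S, g m / nsup m ^ dε = ∑ m ∈ B, g m / nsup m ^ dε := by
    rw [hSdef]
    apply Finset.sum_subset (Finset.filter_subset _ _)
    intro m _ hm
    have : m = 0 := by
      by_contra hc
      exact hm (Finset.mem_filter.2 ⟨by assumption, hc⟩)
    rw [this, hgzero, zero_div]
  calc ∑ m ∈ B, (∑ j ∈ S.filter (fun j => Finset.univ.sup m ≤ ⌊δ * nsup j⌋₊), coeff j) * g m
      ≤ θ * ∑ m ∈ B, g m / nsup m ^ dε := h3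
    _ = θ * ∑ m ∈ S, g m / nsup m ^ dε := by rw [h4]


lemma Lfin (d : ℕ) (p ε δ : ℝ) (hd : 1 ≤ d) (hp : 0 < p) (hε : 0 < ε) (hδ : 0 < δ)
    (hδ1 : δ < 1)
    (habs : (2^p * (δ^d)⁻¹) * ((d:ℝ) * 2^d * δ ^ ((d:ℝ) + ε)) ≤ 1/2)
    (u : (Fin d → ℕ) → ℂ) (hu0 : u 0 = 0) (N : ℕ) (Tr : ℝ) (hTr : 0 ≤ Tr)
    (hDS : ∑ j ∈ (boxF d N).filter (fun j => j ≠ 0), ∑ m ∈ boxF d ⌊δ * nsup j⌋₊,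
        ‖u j - u m‖ ^ p / ndist j m ^ ((d:ℝ) + d + ε) ≤ Tr) :
    ∑ j ∈ (boxF d N).filter (fun j => j ≠ 0),
        ‖u j‖ ^ p / nsup j ^ ((d:ℝ) + ε) ≤ 2 * (2^p * (δ^d)⁻¹) * Tr := by
  have h2p : (0:ℝ) < 2 ^ p := Real.rpow_pos_of_pos two_pos _
  have hc1 : (0:ℝ) < 2^p * (δ^d)⁻¹ := by positivity
  have hSig0 : 0 ≤ ∑ j ∈ (boxF d N).filter (fun j => j ≠ 0),
      ‖u j‖ ^ p / nsup j ^ ((d:ℝ) + ε) :=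
    Finset.sum_nonneg fun j _ => div_nonneg (Real.rpow_nonneg (norm_nonneg _) _)
      (Real.rpow_nonneg (by rw [nsup_def]; positivity) _)
  have h5 : ∑ j ∈ (boxF d N).filter (fun j => j ≠ 0),
        ‖u j‖ ^ p / nsup j ^ ((d:ℝ) + ε)
      ≤ (2^p * (δ^d)⁻¹) * (∑ j ∈ (boxF d N).filter (fun j => j ≠ 0),
            ∑ m ∈ boxF d ⌊δ * nsup j⌋₊,
              ‖u j - u m‖ ^ p / ndist j m ^ ((d:ℝ) + d + ε))
        + (2^p * (δ^d)⁻¹) * (∑ j ∈ (boxF d N).filter (fun j => j ≠ 0),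
            (nsup j ^ ((d:ℝ) + d + ε))⁻¹ *
              ∑ m ∈ boxF d ⌊δ * nsup j⌋₊, ‖u m‖ ^ p) := by
    rw [Finset.mul_sum, Finset.mul_sum, ← Finset.sum_add_distrib]
    apply Finset.sum_le_sum
    intro j hj
    rw [Finset.mem_filter] at hj
    have h := Lpt d p ε δ hp hε hδ hδ1 u j hj.2
    nlinarith [h]
  have h6 := LX d p ε δ hd hp hε hδ hδ1 u hu0 N
  have h7 : (2^p * (δ^d)⁻¹) * (∑ j ∈ (boxF d N).filter (fun j => j ≠ 0),
      (nsup j ^ ((d:ℝ) + d + ε))⁻¹ * ∑ m ∈ boxF d ⌊δ * nsup j⌋₊, ‖u m‖ ^ p)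
      ≤ (1/2) * ∑ j ∈ (boxF d N).filter (fun j => j ≠ 0),
          ‖u j‖ ^ p / nsup j ^ ((d:ℝ) + ε) := by
    calc (2^p * (δ^d)⁻¹) * (∑ j ∈ (boxF d N).filter (fun j => j ≠ 0),
          (nsup j ^ ((d:ℝ) + d + ε))⁻¹ * ∑ m ∈ boxF d ⌊δ * nsup j⌋₊, ‖u m‖ ^ p)
        ≤ (2^p * (δ^d)⁻¹) * (((d:ℝ) * 2^d * δ ^ ((d:ℝ) + ε)) *
            ∑ m ∈ (boxF d N).filter (fun m => m ≠ 0),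
              ‖u m‖ ^ p / nsup m ^ ((d:ℝ) + ε)) :=
          mul_le_mul_of_nonneg_left h6 (le_of_lt hc1)
      _ = ((2^p * (δ^d)⁻¹) * ((d:ℝ) * 2^d * δ ^ ((d:ℝ) + ε))) *
            ∑ m ∈ (boxF d N).filter (fun m => m ≠ 0),
              ‖u m‖ ^ p / nsup m ^ ((d:ℝ) + ε) := by ring
      _ ≤ (1/2) * ∑ m ∈ (boxF d N).filter (fun m => m ≠ 0),
              ‖u m‖ ^ p / nsup m ^ ((d:ℝ) + ε) :=
          mul_le_mul_of_nonneg_right habs hSig0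
  have h8 : (2^p * (δ^d)⁻¹) * (∑ j ∈ (boxF d N).filter (fun j => j ≠ 0),
      ∑ m ∈ boxF d ⌊δ * nsup j⌋₊,
        ‖u j - u m‖ ^ p / ndist j m ^ ((d:ℝ) + d + ε))
      ≤ (2^p * (δ^d)⁻¹) * Tr := mul_le_mul_of_nonneg_left hDS (le_of_lt hc1)
  linarith


/-- Fractional discrete Hardy inequality on `ℤ₊^d` in the critical case `sp = d`,
with an extra power `ε > 0`, for functions with `u(0) = 0`. -/
theorem frac_hardy_sp_eq_d (d : ℕ) (s p ε : ℝ) (hs : 0 < s) (hp : 0 < p)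
    (hspd : s * p = d) (hε : 0 < ε) :
    ∃ c : ℝ, 0 ≤ c ∧ ∀ u : (Fin d → ℕ) → ℂ, u 0 = 0 →
      (∑' (j : {j : Fin d → ℕ // j ≠ 0}),
          ENNReal.ofReal (‖u j.1‖ ^ p / nsup j.1 ^ (s * p + ε)))
        ≤ ENNReal.ofReal c *
            (∑' (j : Fin d → ℕ) (m : {m : Fin d → ℕ // m ≠ j}),
              ENNReal.ofReal
                (‖u j - u m.1‖ ^ p / ndist j m.1 ^ (s * p + d + ε))) ∧
      ENNReal.ofReal c *
            (∑' (j : Fin d → ℕ) (m : {m : Fin d → ℕ // m ≠ j}),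
              ENNReal.ofReal
                (‖u j - u m.1‖ ^ p / ndist j m.1 ^ (s * p + d + ε)))
        ≤ ENNReal.ofReal c *
            ∑' (j : Fin d → ℕ) (m : {m : Fin d → ℕ // m ≠ j}),
              ENNReal.ofReal
                (‖u j - u m.1‖ ^ p / ndist j m.1 ^ (s * p + d)) := by
  classical
  have hd : 1 ≤ d := by
    by_contra hcon
    have hd0 : d = 0 := by omega
    have h1 : (0:ℝ) < s * p := mul_pos hs hp
    rw [hspd, hd0] at h1
    norm_num at h1
  have hd0 : (0:ℝ) < (d:ℝ) := by exact_mod_cast hd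
  have h2p : (0:ℝ) < 2 ^ p := Real.rpow_pos_of_pos two_pos _
  have h2d : (0:ℝ) < (2:ℝ) ^ d := by positivity
  set E : ℝ := 2 * (2 ^ p * 2 ^ d * d) with hEdef
  have hE : 0 < E := by positivity
  set δ : ℝ := min (1/2) (E⁻¹ ^ ε⁻¹) with hδdef
  have hδ : 0 < δ := lt_min (by norm_num) (Real.rpow_pos_of_pos (inv_pos.2 hE) _)
  have hδ1 : δ < 1 := lt_of_le_of_lt (min_le_left _ _) (by norm_num)
  have hδε : δ ^ ε ≤ E⁻¹ := by
    calc δ ^ ε ≤ (E⁻¹ ^ ε⁻¹) ^ ε :=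
        Real.rpow_le_rpow (le_of_lt hδ) (min_le_right _ _) (le_of_lt hε)
      _ = E⁻¹ := Real.rpow_inv_rpow (inv_nonneg.2 (le_of_lt hE)) (ne_of_gt hε)
  have hc1 : (0:ℝ) < 2 ^ p * (δ ^ d)⁻¹ := by positivity
  have habs : (2^p * (δ^d)⁻¹) * ((d:ℝ) * 2^d * δ ^ ((d:ℝ) + ε)) ≤ 1/2 := by
    have hsplit : δ ^ ((d:ℝ) + ε) = δ ^ (d:ℕ) * δ ^ ε := by
      rw [Real.rpow_add hδ, Real.rpow_natCast]
    have hδd : (0:ℝ) < δ ^ (d:ℕ) := by positivity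
    have h1 : (2^p * (δ^d)⁻¹) * ((d:ℝ) * 2^d * δ ^ ((d:ℝ) + ε))
        = 2 ^ p * (d:ℝ) * 2 ^ d * δ ^ ε := by
      rw [hsplit]
      field_simp
    rw [h1]
    have h2 : 2 ^ p * (d:ℝ) * 2 ^ d * δ ^ ε ≤ 2 ^ p * (d:ℝ) * 2 ^ d * E⁻¹ :=
      mul_le_mul_of_nonneg_left hδε (by positivity)
    have h3 : 2 ^ p * (d:ℝ) * 2 ^ d * E⁻¹ = 1 / 2 := by
      rw [hEdef]
      field_simp
    linarith
  refine ⟨max 1 (2 * (2^p * (δ^d)⁻¹)), le_trans zero_le_one (le_max_left _ _),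
    fun u hu0 => ?_⟩
  rw [hspd]
  constructor
  · -- first (main) inequality
    set T : ℝ≥0∞ := ∑' (j : Fin d → ℕ), ∑' (m : {m : Fin d → ℕ // m ≠ j}),
        ENNReal.ofReal
          (‖u j - u m.1‖ ^ p / ndist j m.1 ^ ((d:ℝ) + (d:ℝ) + ε)) with hTdef
    by_cases hT : T = ⊤
    · rw [hT, ENNReal.mul_top]
      · exact le_top
      · refine ne_of_gt (ENNReal.ofReal_pos.2 ?_)
        exact lt_of_lt_of_le one_pos (le_max_left _ _)
    · -- finite case
      have hnnD : ∀ (j m : Fin d → ℕ),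
          0 ≤ ‖u j - u m‖ ^ p / ndist j m ^ ((d:ℝ) + (d:ℝ) + ε) := fun j m =>
        div_nonneg (Real.rpow_nonneg (norm_nonneg _) _)
          (Real.rpow_nonneg (by rw [ndist_def]; positivity) _)
      have hDS : ∀ N : ℕ, ∑ j ∈ (boxF d N).filter (fun j => j ≠ 0),
          ∑ m ∈ boxF d ⌊δ * nsup j⌋₊,
            ‖u j - u m‖ ^ p / ndist j m ^ ((d:ℝ) + (d:ℝ) + ε) ≤ T.toReal := by
        intro N
        have key : ENNReal.ofReal (∑ j ∈ (boxF d N).filter (fun j => j ≠ 0),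
            ∑ m ∈ boxF d ⌊δ * nsup j⌋₊,
              ‖u j - u m‖ ^ p / ndist j m ^ ((d:ℝ) + (d:ℝ) + ε)) ≤ T := by
          rw [ENNReal.ofReal_sum_of_nonneg
            (fun j _ => Finset.sum_nonneg fun m _ => hnnD j m)]
          have hjb : ∀ j ∈ (boxF d N).filter (fun j => j ≠ 0),
              ENNReal.ofReal (∑ m ∈ boxF d ⌊δ * nsup j⌋₊,
                ‖u j - u m‖ ^ p / ndist j m ^ ((d:ℝ) + (d:ℝ) + ε))
              ≤ ∑' (m : {m : Fin d → ℕ // m ≠ j}),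
                  ENNReal.ofReal
                    (‖u j - u m.1‖ ^ p / ndist j m.1 ^ ((d:ℝ) + (d:ℝ) + ε)) := by
            intro j hj
            rw [Finset.mem_filter] at hj
            have hR1 : 1 ≤ Finset.univ.sup j := sup_pos_of_ne hj.2
            have hRr1 : (1:ℝ) ≤ nsup j := one_le_nsup hj.2
            have hkR : ⌊δ * nsup j⌋₊ < Finset.univ.sup j := by
              have h1 : (⌊δ * nsup j⌋₊ : ℝ) ≤ δ * nsup j :=
                Nat.floor_le (mul_nonneg (le_of_lt hδ) (by rw [nsup_def]; positivity))
              have h2 : δ * nsup j < nsup j := by nlinarith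
              have h3 : ((⌊δ * nsup j⌋₊ : ℕ) : ℝ) < ((Finset.univ.sup j : ℕ) : ℝ) := by
                calc ((⌊δ * nsup j⌋₊ : ℕ) : ℝ) ≤ δ * nsup j := h1
                  _ < nsup j := h2
              exact_mod_cast h3
            have hne : ∀ m ∈ boxF d ⌊δ * nsup j⌋₊, m ≠ j := by
              intro m hm hmj
              rw [mem_boxF] at hm
              rw [hmj] at hm
              omega
            rw [ENNReal.ofReal_sum_of_nonneg (fun m _ => hnnD j m)]
            have hmap : ∑ m ∈ boxF d ⌊δ * nsup j⌋₊, ENNReal.ofReal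
                  (‖u j - u m‖ ^ p / ndist j m ^ ((d:ℝ) + (d:ℝ) + ε))
                = ∑ x ∈ (boxF d ⌊δ * nsup j⌋₊).attach.map
                    ⟨fun x => (⟨x.1, hne x.1 x.2⟩ : {m : Fin d → ℕ // m ≠ j}),
                      fun a b hab => by have h := congrArg Subtype.val hab; exact Subtype.ext h⟩,
                    ENNReal.ofReal
                      (‖u j - u x.1‖ ^ p / ndist j x.1 ^ ((d:ℝ) + (d:ℝ) + ε)) := by
              rw [Finset.sum_map]
              exact (Finset.sum_attach _ _).symm
            rw [hmap]
            exact ENNReal.sum_le_tsum _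
          calc ∑ j ∈ (boxF d N).filter (fun j => j ≠ 0),
              ENNReal.ofReal (∑ m ∈ boxF d ⌊δ * nsup j⌋₊,
                ‖u j - u m‖ ^ p / ndist j m ^ ((d:ℝ) + (d:ℝ) + ε))
              ≤ ∑ j ∈ (boxF d N).filter (fun j => j ≠ 0),
                  ∑' (m : {m : Fin d → ℕ // m ≠ j}),
                    ENNReal.ofReal
                      (‖u j - u m.1‖ ^ p /
                        ndist j m.1 ^ ((d:ℝ) + (d:ℝ) + ε)) := Finset.sum_le_sum hjb
            _ ≤ T := by rw [hTdef]; exact ENNReal.sum_le_tsum _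
        have h2 := ENNReal.toReal_mono hT key
        rwa [ENNReal.toReal_ofReal (Finset.sum_nonneg fun j _ =>
          Finset.sum_nonneg fun m _ => hnnD j m)] at h2
      have key2 : ∀ N : ℕ, ∑ j ∈ (boxF d N).filter (fun j => j ≠ 0),
          ‖u j‖ ^ p / nsup j ^ ((d:ℝ) + ε)
            ≤ 2 * (2^p * (δ^d)⁻¹) * T.toReal := by
        intro N
        refine Lfin d p ε δ hd hp hε hδ hδ1 habs u hu0 N T.toReal ENNReal.toReal_nonneg ?_
        exact hDS N
      rw [ENNReal.tsum_eq_iSup_sum]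
      apply iSup_le
      intro F
      have hvnn : ∀ j : Fin d → ℕ, 0 ≤ ‖u j‖ ^ p / nsup j ^ ((d:ℝ) + ε) :=
        fun j => div_nonneg (Real.rpow_nonneg (norm_nonneg _) _)
          (Real.rpow_nonneg (by rw [nsup_def]; positivity) _)
      set N := F.sup (fun x => Finset.univ.sup x.1) with hNdef
      have hsubset : F.image Subtype.val ⊆ (boxF d N).filter (fun j => j ≠ 0) := by
        intro j hj
        rw [Finset.mem_image] at hj
        obtain ⟨x, hx, hxj⟩ := hj
        rw [Finset.mem_filter, mem_boxF]
        constructor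
        · rw [← hxj]
          exact Finset.le_sup (f := fun x => Finset.univ.sup x.1) hx
        · rw [← hxj]; exact x.2
      have h2 : ∑ x ∈ F, ‖u x.1‖ ^ p / nsup x.1 ^ ((d:ℝ) + ε)
          ≤ ∑ j ∈ (boxF d N).filter (fun j => j ≠ 0),
              ‖u j‖ ^ p / nsup j ^ ((d:ℝ) + ε) := by
        have himg := Finset.sum_image (s := F) (g := Subtype.val)
          (f := fun j => ‖u j‖ ^ p / nsup j ^ ((d:ℝ) + ε))
          (fun x _ y _ h => Subtype.ext h)
        exact le_trans (le_of_eq himg.symm)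
          (Finset.sum_le_sum_of_subset_of_nonneg hsubset (fun j _ _ => hvnn j))
      calc ∑ x ∈ F, ENNReal.ofReal (‖u x.1‖ ^ p / nsup x.1 ^ ((d:ℝ) + ε))
          = ENNReal.ofReal (∑ x ∈ F, ‖u x.1‖ ^ p / nsup x.1 ^ ((d:ℝ) + ε)) :=
            (ENNReal.ofReal_sum_of_nonneg (fun x _ => hvnn x.1)).symm
        _ ≤ ENNReal.ofReal (2 * (2^p * (δ^d)⁻¹) * T.toReal) :=
            ENNReal.ofReal_le_ofReal (le_trans h2 (key2 N))
        _ = ENNReal.ofReal (2 * (2^p * (δ^d)⁻¹)) * ENNReal.ofReal T.toReal :=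
            ENNReal.ofReal_mul (by positivity)
        _ = ENNReal.ofReal (2 * (2^p * (δ^d)⁻¹)) * T := by rw [ENNReal.ofReal_toReal hT]
        _ ≤ ENNReal.ofReal (max 1 (2 * (2^p * (δ^d)⁻¹))) * T :=
            mul_le_mul_left (ENNReal.ofReal_le_ofReal (le_max_right _ _)) _
  · -- second inequality
    apply mul_le_mul_right
    apply ENNReal.tsum_le_tsum
    intro j
    apply ENNReal.tsum_le_tsum
    intro m
    apply ENNReal.ofReal_le_ofReal
    have hnd1 : (1:ℝ) ≤ ndist j m.1 := by
      rw [ndist_def]; exact_mod_cast one_le_NdN m.2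
    have hdenpos : (0:ℝ) < ndist j m.1 ^ ((d:ℝ) + (d:ℝ)) :=
      Real.rpow_pos_of_pos (by linarith) _
    rw [div_eq_mul_inv, div_eq_mul_inv]
    apply mul_le_mul_of_nonneg_left _ (Real.rpow_nonneg (norm_nonneg _) _)
    apply inv_anti₀ hdenpos
    apply Real.rpow_le_rpow_of_exponent_le hnd1
    linarith
end

section
/- Let 0 < s, p < ∞ with sp < d, and let δ > 0 satisfy d − sp ≥ δ. Then there exists a constant c = c(s, p, δ) < ∞ such that for every function u : ℤ^d → ℂ for which the left-hand side below is finite, one has ∑_{j ∈ ℤ^d \ {0}} |u(j)|^p / ‖j‖_∞^{sp} ≤ c · ∑_{j ∈ ℤ^d \ {0}} ∑_{m ∈ ℤ^d \ {0}, m ≠ j} |u(j) − u(m)|^p / ‖j − m‖_∞^{sp+d}. -/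
open scoped ENNReal

namespace FH


def nsup {d : ℕ} (x : Fin d → ℤ) : ℕ := Finset.univ.sup fun i => (x i).natAbs

lemma zsup_eq {d : ℕ} (x : Fin d → ℤ) : zsup x = (nsup x : ℝ) := rfl

lemma le_nsup {d : ℕ} (x : Fin d → ℤ) (i : Fin d) : (x i).natAbs ≤ nsup x :=
  Finset.le_sup (f := fun i => (x i).natAbs) (Finset.mem_univ i)

lemma nsup_le {d : ℕ} {x : Fin d → ℤ} {N : ℕ} (h : ∀ i, (x i).natAbs ≤ N) : nsup x ≤ N :=
  Finset.sup_le fun i _ => h i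

lemma one_le_nsup {d : ℕ} {x : Fin d → ℤ} (hx : x ≠ 0) : 1 ≤ nsup x := by
  obtain ⟨i, hi⟩ : ∃ i, x i ≠ 0 := by
    by_contra h; push_neg at h; exact hx (funext h)
  exact (Int.natAbs_pos.mpr hi).trans_le (le_nsup x i)

def isign (x : ℤ) : ℤ := if 0 ≤ x then 1 else -1

lemma isign_cases (x : ℤ) : isign x = 1 ∨ isign x = -1 := by
  unfold isign; split <;> simp

noncomputable def Qset (Λ : ℕ) {d : ℕ} (j : Fin d → ℤ) : Finset (Fin d → ℤ) :=
  (Fintype.piFinset fun _ : Fin d => Finset.Icc (1 : ℤ) ((Λ * nsup j : ℕ) : ℤ)).image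
    fun t i => j i + isign (j i) * t i

lemma mem_Qset {Λ : ℕ} {d : ℕ} {j m : Fin d → ℤ} :
    m ∈ Qset Λ j ↔ ∃ t : Fin d → ℤ,
      (∀ i, 1 ≤ t i ∧ t i ≤ ((Λ * nsup j : ℕ) : ℤ)) ∧ ∀ i, m i = j i + isign (j i) * t i := by
  simp only [Qset, Finset.mem_image, Fintype.mem_piFinset, Finset.mem_Icc]
  constructor
  · rintro ⟨t, ht, rfl⟩; exact ⟨t, fun i => ht i, fun i => rfl⟩
  · rintro ⟨t, ht, hm⟩; exact ⟨t, fun i => ht i, funext fun i => (hm i).symm⟩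

lemma card_Qset (Λ : ℕ) {d : ℕ} (j : Fin d → ℤ) : (Qset Λ j).card = (Λ * nsup j) ^ d := by
  have hinj : Function.Injective
      (fun (t : Fin d → ℤ) => (fun i => j i + isign (j i) * t i : Fin d → ℤ)) := by
    intro a b hab
    funext i
    have h := congrFun hab i
    simp only at h
    rcases isign_cases (j i) with h1 | h1 <;> rw [h1] at h <;> omega
  rw [Qset, Finset.card_image_of_injective _ hinj, Fintype.card_piFinset]
  have : (Finset.Icc (1 : ℤ) ((Λ * nsup j : ℕ) : ℤ)).card = Λ * nsup j := by
    rw [Int.card_Icc]; omega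
  simp only [this, Finset.prod_const, Finset.card_univ, Fintype.card_fin]

lemma Qset_spec {Λ : ℕ} {d : ℕ} (hd : 0 < d) {j m : Fin d → ℤ} (hm : m ∈ Qset Λ j) :
    m ≠ 0 ∧ m ≠ j ∧ 1 ≤ nsup (j - m) ∧ nsup (j - m) ≤ Λ * nsup j ∧
      nsup m ≤ (1 + Λ) * nsup j ∧
      ∀ i, (0 ≤ m i → 0 ≤ j i) ∧ (m i < 0 → j i ≤ 0) := by
  obtain ⟨t, ht, hmi⟩ := mem_Qset.mp hm
  have hco : ∀ i, ((j - m) i).natAbs = (t i).natAbs ∧ (t i).natAbs ≥ 1 ∧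
      (0 ≤ m i → 0 ≤ j i) ∧ (m i < 0 → j i ≤ 0) ∧ m i ≠ 0 := by
    intro i
    have h1 := (ht i).1
    have h2 := hmi i
    have h3 : (j - m) i = j i - m i := by simp
    by_cases h4 : 0 ≤ j i
    · have h4' : isign (j i) = 1 := by unfold isign; exact if_pos h4
      rw [h4'] at h2
      exact ⟨by omega, by omega, by omega, by omega, by omega⟩
    · have h4' : isign (j i) = -1 := by unfold isign; exact if_neg h4
      rw [h4'] at h2
      exact ⟨by omega, by omega, by omega, by omega, by omega⟩
  have i0 : Fin d := ⟨0, hd⟩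
  have habs : ∀ i, (t i).natAbs ≤ Λ * nsup j := by
    intro i; have := (ht i).1; have := (ht i).2; omega
  refine ⟨?_, ?_, ?_, ?_, ?_, fun i => ⟨(hco i).2.2.1, (hco i).2.2.2.1⟩⟩
  · intro h
    have := (hco i0).2.2.2.2
    exact this (by rw [h]; rfl)
  · intro h
    have h5 := (hco i0).1
    have h6 := (hco i0).2.1
    rw [h] at h5
    simp at h5
    omega
  · have h5 := (hco i0).1
    have h6 := (hco i0).2.1
    calc 1 ≤ (t i0).natAbs := h6
    _ = ((j - m) i0).natAbs := h5.symm
    _ ≤ nsup (j - m) := le_nsup _ i0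
  · refine nsup_le fun i => ?_
    rw [(hco i).1]; exact habs i
  · refine nsup_le fun i => ?_
    have h5 : (m i).natAbs ≤ (j i).natAbs + ((j - m) i).natAbs := by
      have h3 : (j - m) i = j i - m i := by simp
      omega
    have h6 := le_nsup j i
    have h7 : ((j - m) i).natAbs ≤ Λ * nsup j := by rw [(hco i).1]; exact habs i
    calc (m i).natAbs ≤ nsup j + Λ * nsup j := by omega
    _ = (1 + Λ) * nsup j := by ring



lemma pow_split {a b c pp : ℝ} (hp : 0 < pp) (ha : 0 ≤ a) (hb : 0 ≤ b) (hc : 0 ≤ c)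
    (h : a ≤ b + c) : a ^ pp ≤ 2 ^ pp * (b ^ pp + c ^ pp) := by
  have h1 : a ≤ 2 * max b c := by
    rcases le_total b c with h2 | h2
    · have := le_max_right b c; linarith
    · have := le_max_left b c; linarith
  calc a ^ pp ≤ (2 * max b c) ^ pp := Real.rpow_le_rpow ha h1 hp.le
    _ = 2 ^ pp * (max b c) ^ pp := Real.mul_rpow (by norm_num) (le_max_of_le_left hb)
    _ ≤ 2 ^ pp * (b ^ pp + c ^ pp) := by
        have : (max b c) ^ pp ≤ b ^ pp + c ^ pp := by
          rcases max_cases b c with ⟨h3, _⟩ | ⟨h3, _⟩ <;> rw [h3]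
          · exact le_add_of_nonneg_right (Real.rpow_nonneg hc pp)
          · exact le_add_of_nonneg_left (Real.rpow_nonneg hb pp)
        exact mul_le_mul_of_nonneg_left this (Real.rpow_nonneg (by norm_num) pp)

lemma two_pow_q_inv (q : ℝ) (k : ℕ) : ((((2:ℝ) ^ k) ^ q))⁻¹ = ((2:ℝ) ^ (-q)) ^ k := by
  rw [← Real.rpow_natCast (2:ℝ) k, ← Real.rpow_natCast ((2:ℝ) ^ (-q)) k,
    ← Real.rpow_mul (by norm_num), ← Real.rpow_mul (by norm_num),
    ← Real.rpow_neg (by norm_num)]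
  ring_nf

lemma tsum_shift (g : ℕ → ℝ≥0∞) (K : ℕ) :
    (∑' t : ℕ, if K ≤ t then g t else 0) = ∑' i : ℕ, g (K + i) := by
  have hinj : Function.Injective (fun i : ℕ => K + i) := fun a b h => by simpa using h
  have h := hinj.tsum_eq (f := fun t => if K ≤ t then g t else 0) ?_
  · rw [← h]
    refine tsum_congr fun i => ?_
    simp
  · intro x hx
    simp only [Function.mem_support] at hx
    by_cases h : K ≤ x
    · exact ⟨x - K, by simp; omega⟩
    · simp [h] at hx

lemma tsum_threshold_geom (D r : ℝ) (hD : 0 ≤ D) (hr0 : 0 ≤ r) (hr1 : r < 1) (K : ℕ) :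
    (∑' t : ℕ, if K ≤ t then ENNReal.ofReal (D * r ^ t) else 0)
      = ENNReal.ofReal (D * r ^ K * (1 - r)⁻¹) := by
  rw [tsum_shift]
  have h1 : ∀ i : ℕ, ENNReal.ofReal (D * r ^ (K + i))
      = ENNReal.ofReal (D * r ^ K) * (ENNReal.ofReal r) ^ i := by
    intro i
    rw [pow_add, ← mul_assoc, ENNReal.ofReal_mul (by positivity), ENNReal.ofReal_pow hr0]
  calc (∑' i : ℕ, ENNReal.ofReal (D * r ^ (K + i)))
      = ENNReal.ofReal (D * r ^ K) * ∑' i : ℕ, (ENNReal.ofReal r) ^ i := by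
        rw [← ENNReal.tsum_mul_left]; exact tsum_congr h1
    _ = ENNReal.ofReal (D * r ^ K) * (1 - ENNReal.ofReal r)⁻¹ := by
        rw [ENNReal.tsum_geometric]
    _ = ENNReal.ofReal (D * r ^ K * (1 - r)⁻¹) := by
        conv_rhs => rw [ENNReal.ofReal_mul (show (0:ℝ) ≤ D * r ^ K by positivity)]
        congr 1
        rw [← ENNReal.ofReal_one, ← ENNReal.ofReal_sub _ hr0,
          ← ENNReal.ofReal_inv_of_pos (by linarith)]

lemma exists_Lambda (s p δ : ℝ) (hs : 0 < s) (hp : 0 < p) (hδ : 0 < δ) :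
    ∃ Λ : ℕ, 4 ≤ Λ ∧ ∀ d : ℕ, 0 < d → s * p + δ ≤ (d : ℝ) →
      (2:ℝ) ^ p * (2 * (1 + (Λ:ℝ))) ^ (s * p) * (1 - 2 ^ (-(s * p)))⁻¹ * ((2 / (Λ:ℝ))) ^ d
        ≤ 1 / 2 := by
  set q := s * p with hqdef
  have hq : 0 < q := mul_pos hs hp
  set r := (2:ℝ) ^ (-q) with hrdef
  have hr0 : 0 < r := Real.rpow_pos_of_pos (by norm_num) _
  have hr1 : r < 1 := Real.rpow_lt_one_of_one_lt_of_neg (by norm_num) (by linarith)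
  have h1r : 0 < 1 - r := by linarith
  set M : ℝ := 2 ^ (p + 1) * 4 ^ q * (1 - r)⁻¹ with hMdef
  have hM : 0 < M := by positivity
  set B : ℝ := M * 2 ^ (2 * (q + δ)) with hBdef
  have hB : 0 < B := by positivity
  refine ⟨max 4 ⌈B ^ δ⁻¹⌉₊, le_max_left _ _, ?_⟩
  set Λ : ℕ := max 4 ⌈B ^ δ⁻¹⌉₊ with hΛdef
  have hΛ4 : (4:ℝ) ≤ (Λ:ℝ) := by
    have : (4:ℕ) ≤ Λ := le_max_left _ _
    exact_mod_cast this
  have hΛ0 : (0:ℝ) < (Λ:ℝ) := by linarith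
  have hΛB : B ≤ (Λ:ℝ) ^ δ := by
    have h1 : B ^ δ⁻¹ ≤ (Λ:ℝ) := by
      calc B ^ δ⁻¹ ≤ (⌈B ^ δ⁻¹⌉₊ : ℝ) := Nat.le_ceil _
        _ ≤ (Λ:ℝ) := by exact_mod_cast Nat.cast_le.mpr (le_max_right _ _)
    calc B = (B ^ δ⁻¹) ^ δ := by
          rw [← Real.rpow_mul hB.le, inv_mul_cancel₀ hδ.ne', Real.rpow_one]
      _ ≤ (Λ:ℝ) ^ δ := Real.rpow_le_rpow (Real.rpow_nonneg hB.le _) h1 hδ.le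
  intro d hd hdq
  rw [div_pow, ← mul_div_assoc]
  rw [div_le_div_iff₀ (by positivity) (by norm_num)]
  -- goal : 2^p * (2*(1+Λ))^q * (1-r)⁻¹ * 2^d * 2 ≤ Λ^d * 1
  have key : M * 2 ^ (d:ℝ) ≤ (Λ:ℝ) ^ ((d:ℝ) - q) := by
    have e0 : (0:ℝ) ≤ (d:ℝ) - q - δ := by linarith
    have h2 : (4:ℝ) ^ ((d:ℝ) - q - δ) ≤ (Λ:ℝ) ^ ((d:ℝ) - q - δ) :=
      Real.rpow_le_rpow (by norm_num) hΛ4 e0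
    have h3 : (Λ:ℝ) ^ ((d:ℝ) - q) = (Λ:ℝ) ^ δ * (Λ:ℝ) ^ ((d:ℝ) - q - δ) := by
      rw [← Real.rpow_add hΛ0]; ring_nf
    have h4 : B * (4:ℝ) ^ ((d:ℝ) - q - δ) ≤ (Λ:ℝ) ^ ((d:ℝ) - q) := by
      rw [h3]
      exact mul_le_mul hΛB h2 (Real.rpow_nonneg (by norm_num) _) (Real.rpow_nonneg hΛ0.le _)
    refine le_trans ?_ h4
    have h5 : (4:ℝ) ^ ((d:ℝ) - q - δ) = 2 ^ (2 * ((d:ℝ) - q - δ)) := by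
      have : (4:ℝ) = 2 ^ (2:ℝ) := by
        rw [show (2:ℝ) = ((2:ℕ):ℝ) by norm_num, Real.rpow_natCast]; norm_num
      rw [this, ← Real.rpow_mul (by norm_num)]
    rw [h5, hBdef]
    calc M * 2 ^ ((d:ℝ)) ≤ M * (2 ^ (2 * (q + δ)) * 2 ^ (2 * ((d:ℝ) - q - δ))) := by
          refine mul_le_mul_of_nonneg_left ?_ hM.le
          rw [← Real.rpow_add (by norm_num : (0:ℝ) < 2)]
          exact Real.rpow_le_rpow_of_exponent_le (by norm_num) (by linarith)
      _ = M * 2 ^ (2 * (q + δ)) * 2 ^ (2 * ((d:ℝ) - q - δ)) := by ring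
  have hpow : (2:ℝ) ^ (d:ℝ) = (2:ℝ) ^ d := Real.rpow_natCast 2 d
  have hΛpow : (Λ:ℝ) ^ ((d:ℝ)) = (Λ:ℝ) ^ d := Real.rpow_natCast _ d
  have split : (Λ:ℝ) ^ ((d:ℝ)) = (Λ:ℝ) ^ q * (Λ:ℝ) ^ ((d:ℝ) - q) := by
    rw [← Real.rpow_add hΛ0]; ring_nf
  have h7 : (2 * (1 + (Λ:ℝ))) ^ q ≤ 4 ^ q * (Λ:ℝ) ^ q := by
    rw [← Real.mul_rpow (by norm_num) hΛ0.le]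
    exact Real.rpow_le_rpow (by positivity) (by linarith) hq.le
  calc 2 ^ p * (2 * (1 + (Λ:ℝ))) ^ q * (1 - r)⁻¹ * 2 ^ d * 2
      ≤ 2 ^ p * (4 ^ q * (Λ:ℝ) ^ q) * (1 - r)⁻¹ * 2 ^ d * 2 := by
        exact mul_le_mul_of_nonneg_right (mul_le_mul_of_nonneg_right
          (mul_le_mul_of_nonneg_right
            (mul_le_mul_of_nonneg_left h7 (Real.rpow_nonneg (by norm_num) p))
            (by positivity)) (by positivity)) (by norm_num)
    _ = (Λ:ℝ) ^ q * (M * 2 ^ (d:ℝ)) := by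
        rw [hMdef, hpow]
        rw [Real.rpow_add (by norm_num : (0:ℝ) < 2) p 1, Real.rpow_one]
        ring
    _ ≤ (Λ:ℝ) ^ q * (Λ:ℝ) ^ ((d:ℝ) - q) :=
        mul_le_mul_of_nonneg_left key (Real.rpow_nonneg hΛ0.le _)
    _ = 1 * ((Λ:ℝ) ^ d) := by rw [← split, hΛpow, one_mul]


lemma averaging (p q : ℝ) (hp : 0 < p) (hq : 0 < q) (Λ : ℕ) (hΛ1 : 1 ≤ Λ) {d : ℕ}
    (hd : 0 < d) (u : (Fin d → ℤ) → ℂ) (j : Fin d → ℤ) (hj : j ≠ 0) :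
    ENNReal.ofReal (‖u j‖ ^ p / zsup j ^ q)
      ≤ ENNReal.ofReal (2 ^ p * (Λ:ℝ) ^ q) *
          (∑' (m : {m : Fin d → ℤ // m ≠ 0 ∧ m ≠ j}),
            ENNReal.ofReal (‖u j - u m.1‖ ^ p / zsup (j - m.1) ^ (q + d)))
        + ∑ m ∈ Qset Λ j, ENNReal.ofReal
            (2 ^ p * ‖u m‖ ^ p /
              (((Λ * nsup j : ℕ) : ℝ) ^ d * ((nsup j : ℕ) : ℝ) ^ q)) := by
  classical
  set R : ℕ := nsup j with hRdef
  have hR : 1 ≤ R := one_le_nsup hj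
  set L : ℕ := Λ * R with hLdef
  have hL1 : 1 ≤ L := by
    have := Nat.mul_le_mul hΛ1 hR
    omega
  have hLpos : (0:ℝ) < (L:ℝ) := by exact_mod_cast hL1
  have hRq : (0:ℝ) < ((R:ℕ):ℝ) ^ q := Real.rpow_pos_of_pos (by exact_mod_cast hR) q
  -- the two comparison terms
  set Dm : (Fin d → ℤ) → ℝ≥0∞ := fun m =>
    ENNReal.ofReal (2 ^ p * (Λ:ℝ) ^ q *
      (‖u j - u m‖ ^ p / zsup (j - m) ^ (q + d))) with hDmdef
  set Em : (Fin d → ℤ) → ℝ≥0∞ := fun m =>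
    ENNReal.ofReal (2 ^ p * ‖u m‖ ^ p / ((L:ℝ) ^ d * ((R:ℕ):ℝ) ^ q)) with hEmdef
  have hper : ∀ m ∈ Qset Λ j,
      ENNReal.ofReal (‖u j‖ ^ p / zsup j ^ q)
        ≤ ((L ^ d : ℕ) : ℝ≥0∞) * (Dm m + Em m) := by
    intro m hm
    obtain ⟨hm0, hmj, hz1, hzL, -, -⟩ := Qset_spec hd hm
    set X : ℝ := ‖u j - u m‖ ^ p with hXdef
    set Y : ℝ := ‖u m‖ ^ p with hYdef
    have hX0 : 0 ≤ X := Real.rpow_nonneg (norm_nonneg _) p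
    have hY0 : 0 ≤ Y := Real.rpow_nonneg (norm_nonneg _) p
    have hzpos : (0:ℝ) < zsup (j - m) ^ (q + (d:ℝ)) := by
      apply Real.rpow_pos_of_pos
      rw [zsup_eq]
      exact_mod_cast hz1
    -- step i
    have hstep1 : ‖u j‖ ^ p ≤ 2 ^ p * (X + Y) := by
      refine pow_split hp (norm_nonneg _) (norm_nonneg _)
        (norm_nonneg _) ?_
      calc ‖u j‖ = ‖(u j - u m) + u m‖ := by ring_nf
        _ ≤ ‖u j - u m‖ + ‖u m‖ := norm_add_le _ _
    -- step ii : divide by R^q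
    have hstep2 : ‖u j‖ ^ p / zsup j ^ q
        ≤ 2 ^ p * X / ((R:ℕ):ℝ) ^ q + 2 ^ p * Y / ((R:ℕ):ℝ) ^ q := by
      rw [zsup_eq, ← hRdef]
      calc ‖u j‖ ^ p / ((R:ℕ):ℝ) ^ q
          ≤ (2 ^ p * (X + Y)) / ((R:ℕ):ℝ) ^ q := (div_le_div_iff_of_pos_right hRq).mpr hstep1
        _ = 2 ^ p * X / ((R:ℕ):ℝ) ^ q + 2 ^ p * Y / ((R:ℕ):ℝ) ^ q := by ring
    -- D-part coefficient inequality
    have hzLR : zsup (j - m) ≤ (L:ℝ) := by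
      rw [zsup_eq]
      exact_mod_cast hzL
    have hz0 : (0:ℝ) ≤ zsup (j - m) := by
      rw [zsup_eq]; positivity
    have hcoe : zsup (j - m) ^ (q + (d:ℝ)) ≤ (L:ℝ) ^ d * ((Λ:ℝ) ^ q * ((R:ℕ):ℝ) ^ q) := by
      calc zsup (j - m) ^ (q + (d:ℝ)) ≤ (L:ℝ) ^ (q + (d:ℝ)) :=
            Real.rpow_le_rpow hz0 hzLR (by positivity)
        _ = (L:ℝ) ^ q * (L:ℝ) ^ (d:ℝ) := Real.rpow_add hLpos _ _
        _ = (L:ℝ) ^ q * (L:ℝ) ^ d := by rw [Real.rpow_natCast]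
        _ = ((Λ:ℝ) ^ q * ((R:ℕ):ℝ) ^ q) * (L:ℝ) ^ d := by
            rw [hLdef, Nat.cast_mul, Real.mul_rpow (by positivity) (by positivity)]
        _ = (L:ℝ) ^ d * ((Λ:ℝ) ^ q * ((R:ℕ):ℝ) ^ q) := by ring
    have hDpart : 2 ^ p * X / ((R:ℕ):ℝ) ^ q
        ≤ (L:ℝ) ^ d * (2 ^ p * (Λ:ℝ) ^ q * (X / zsup (j - m) ^ (q + (d:ℝ)))) := by
      have hinv : (((R:ℕ):ℝ) ^ q)⁻¹ ≤ (L:ℝ) ^ d * (Λ:ℝ) ^ q / zsup (j - m) ^ (q + (d:ℝ)) := by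
        rw [le_div_iff₀ hzpos]
        rw [inv_mul_eq_div, div_le_iff₀ hRq] at *
        calc zsup (j - m) ^ (q + (d:ℝ)) ≤ (L:ℝ) ^ d * ((Λ:ℝ) ^ q * ((R:ℕ):ℝ) ^ q) := hcoe
          _ = (L:ℝ) ^ d * (Λ:ℝ) ^ q * ((R:ℕ):ℝ) ^ q := by ring
      calc 2 ^ p * X / ((R:ℕ):ℝ) ^ q = (2 ^ p * X) * (((R:ℕ):ℝ) ^ q)⁻¹ := by ring
        _ ≤ (2 ^ p * X) * ((L:ℝ) ^ d * (Λ:ℝ) ^ q / zsup (j - m) ^ (q + (d:ℝ))) := by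
            refine mul_le_mul_of_nonneg_left hinv (by positivity)
        _ = (L:ℝ) ^ d * (2 ^ p * (Λ:ℝ) ^ q * (X / zsup (j - m) ^ (q + (d:ℝ)))) := by
            ring
    -- E-part equality
    have hEpart : 2 ^ p * Y / ((R:ℕ):ℝ) ^ q
        = (L:ℝ) ^ d * (2 ^ p * Y / ((L:ℝ) ^ d * ((R:ℕ):ℝ) ^ q)) := by
      have hLd : ((L:ℝ) ^ d) ≠ 0 := by positivity
      field_simp
    -- assemble
    have hcast : ((L ^ d : ℕ) : ℝ≥0∞) = ENNReal.ofReal ((L:ℝ) ^ d) := by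
      rw [← Nat.cast_pow, ENNReal.ofReal_natCast, Nat.cast_pow]
    calc ENNReal.ofReal (‖u j‖ ^ p / zsup j ^ q)
        ≤ ENNReal.ofReal (2 ^ p * X / ((R:ℕ):ℝ) ^ q + 2 ^ p * Y / ((R:ℕ):ℝ) ^ q) :=
          ENNReal.ofReal_le_ofReal hstep2
      _ = ENNReal.ofReal (2 ^ p * X / ((R:ℕ):ℝ) ^ q)
            + ENNReal.ofReal (2 ^ p * Y / ((R:ℕ):ℝ) ^ q) := by
          rw [ENNReal.ofReal_add (by positivity) (by positivity)]
      _ ≤ ENNReal.ofReal ((L:ℝ) ^ d * (2 ^ p * (Λ:ℝ) ^ q * (X / zsup (j - m) ^ (q + (d:ℝ)))))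
            + ENNReal.ofReal ((L:ℝ) ^ d * (2 ^ p * Y / ((L:ℝ) ^ d * ((R:ℕ):ℝ) ^ q))) := by
          exact add_le_add (ENNReal.ofReal_le_ofReal hDpart)
            (le_of_eq (congrArg _ hEpart))
      _ = ((L ^ d : ℕ) : ℝ≥0∞) * (Dm m + Em m) := by
          simp only [hDmdef, hEmdef, hcast]
          rw [mul_add, ← ENNReal.ofReal_mul (show (0:ℝ) ≤ ((L:ℝ))^d by positivity),
            ← ENNReal.ofReal_mul (show (0:ℝ) ≤ ((L:ℝ))^d by positivity)]
  -- now sum over the cube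
  have hcard : (Qset Λ j).card = L ^ d := by rw [card_Qset, hLdef, hRdef]
  have hne : ((L ^ d : ℕ) : ℝ≥0∞) ≠ 0 := by
    simp only [ne_eq, Nat.cast_eq_zero]
    positivity
  have hnetop : ((L ^ d : ℕ) : ℝ≥0∞) ≠ ⊤ := ENNReal.natCast_ne_top _
  have h2 : ((L ^ d : ℕ) : ℝ≥0∞) * ENNReal.ofReal (‖u j‖ ^ p / zsup j ^ q)
      ≤ ((L ^ d : ℕ) : ℝ≥0∞) * ∑ m ∈ Qset Λ j, (Dm m + Em m) := by
    calc ((L ^ d : ℕ) : ℝ≥0∞) * ENNReal.ofReal (‖u j‖ ^ p / zsup j ^ q)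
        = ∑ _m ∈ Qset Λ j, ENNReal.ofReal (‖u j‖ ^ p / zsup j ^ q) := by
          rw [Finset.sum_const, hcard, nsmul_eq_mul]
      _ ≤ ∑ m ∈ Qset Λ j, ((L ^ d : ℕ) : ℝ≥0∞) * (Dm m + Em m) := Finset.sum_le_sum hper
      _ = ((L ^ d : ℕ) : ℝ≥0∞) * ∑ m ∈ Qset Λ j, (Dm m + Em m) := by
          rw [Finset.mul_sum]
  have h3 := (ENNReal.mul_le_mul_iff_right hne hnetop).mp h2
  refine h3.trans ?_
  rw [Finset.sum_add_distrib]
  refine add_le_add ?_ ?_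
  · -- difference part into the tsum
    have hsplit : ∀ m : Fin d → ℤ, Dm m = ENNReal.ofReal (2 ^ p * (Λ:ℝ) ^ q) *
        ENNReal.ofReal (‖u j - u m‖ ^ p / zsup (j - m) ^ (q + (d:ℝ))) := by
      intro m
      simp only [hDmdef]
      rw [ENNReal.ofReal_mul (show (0:ℝ) ≤ 2 ^ p * (Λ:ℝ) ^ q by positivity)]
    calc ∑ m ∈ Qset Λ j, Dm m
        = ENNReal.ofReal (2 ^ p * (Λ:ℝ) ^ q) * ∑ m ∈ Qset Λ j,
            ENNReal.ofReal (‖u j - u m‖ ^ p / zsup (j - m) ^ (q + (d:ℝ))) := by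
          rw [Finset.mul_sum]
          exact Finset.sum_congr rfl fun m _ => hsplit m
      _ ≤ ENNReal.ofReal (2 ^ p * (Λ:ℝ) ^ q) *
            (∑' (m : {m : Fin d → ℤ // m ≠ 0 ∧ m ≠ j}),
              ENNReal.ofReal (‖u j - u m.1‖ ^ p / zsup (j - m.1) ^ (q + d))) := by
          refine mul_le_mul_of_nonneg_left ?_ (zero_le)
          have hrepr : (∑' (m : {m : Fin d → ℤ // m ≠ 0 ∧ m ≠ j}),
              ENNReal.ofReal (‖u j - u m.1‖ ^ p / zsup (j - m.1) ^ (q + d)))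
              = ∑' (m : Fin d → ℤ), (if m ≠ 0 ∧ m ≠ j then
                  ENNReal.ofReal (‖u j - u m‖ ^ p / zsup (j - m) ^ (q + d))
                else 0) := by
            have h0 := tsum_subtype {m : Fin d → ℤ | m ≠ 0 ∧ m ≠ j}
              (fun m => ENNReal.ofReal (‖u j - u m‖ ^ p / zsup (j - m) ^ (q + d)))
            refine h0.trans (tsum_congr fun m => ?_)
            by_cases h : m ≠ 0 ∧ m ≠ j <;> simp [Set.indicator, Set.mem_setOf_eq, h]
          rw [hrepr]
          have heq : ∀ m ∈ Qset Λ j,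
              ENNReal.ofReal (‖u j - u m‖ ^ p / zsup (j - m) ^ (q + (d:ℝ)))
              = (if m ≠ 0 ∧ m ≠ j then
                  ENNReal.ofReal (‖u j - u m‖ ^ p / zsup (j - m) ^ (q + d))
                else 0) := by
            intro m hm
            obtain ⟨hm0, hmj, -, -, -, -⟩ := Qset_spec hd hm
            rw [if_pos ⟨hm0, hmj⟩]
          rw [Finset.sum_congr rfl heq]
          exact ENNReal.sum_le_tsum _
  · -- E part : matches exactly
    refine le_of_eq (Finset.sum_congr rfl fun m _ => ?_)
    rw [hEmdef]

lemma counting (p q : ℝ) (hp : 0 < p) (hq : 0 < q) (Λ : ℕ) (hΛ1 : 1 ≤ Λ) {d : ℕ}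
    (hd : 0 < d) (u : (Fin d → ℤ) → ℂ) (m : Fin d → ℤ) (hm : m ≠ 0) :
    (∑' j : Fin d → ℤ, if j ≠ 0 ∧ m ∈ Qset Λ j then
        ENNReal.ofReal (2 ^ p * ((nsup m : ℕ) : ℝ) ^ q *
          ((((Λ * nsup j : ℕ)) : ℝ) ^ d * ((nsup j : ℕ) : ℝ) ^ q)⁻¹) else 0)
      ≤ ENNReal.ofReal
          (2 ^ p * (2 * (1 + (Λ:ℝ))) ^ q * (1 - 2 ^ (-q))⁻¹ * ((2 / (Λ:ℝ))) ^ d) := by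
  classical
  set ρ : ℕ := nsup m with hρdef
  have hρ1 : 1 ≤ ρ := one_le_nsup hm
  set r : ℝ := (2:ℝ) ^ (-q) with hrdef
  have hr0 : 0 < r := Real.rpow_pos_of_pos (by norm_num) _
  have hr1 : r < 1 := Real.rpow_lt_one_of_one_lt_of_neg (by norm_num) (by linarith)
  set D0 : ℝ := 2 ^ p * ((ρ:ℕ):ℝ) ^ q * ((2 / (Λ:ℝ))) ^ d with hD0def
  have hΛR : (0:ℝ) < (Λ:ℝ) := by exact_mod_cast hΛ1
  have hD00 : 0 ≤ D0 := by rw [hD0def]; positivity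
  set g : (Fin d → ℤ) → ℝ≥0∞ := fun j => if j ≠ 0 ∧ m ∈ Qset Λ j then
      ENNReal.ofReal (2 ^ p * ((ρ:ℕ):ℝ) ^ q *
        ((((Λ * nsup j : ℕ)) : ℝ) ^ d * ((nsup j : ℕ) : ℝ) ^ q)⁻¹) else 0 with hgdef
  -- existence of a threshold
  have hex : ∃ k : ℕ, ρ ≤ (1 + Λ) * 2 ^ (k + 1) := by
    refine ⟨ρ, ?_⟩
    calc ρ ≤ 2 ^ ρ := (Nat.lt_two_pow_self (n := ρ)).le
      _ ≤ 2 ^ (ρ + 1) := Nat.pow_le_pow_right (by norm_num) (by omega)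
      _ ≤ (1 + Λ) * 2 ^ (ρ + 1) := Nat.le_mul_of_pos_left _ (by omega)
  set K : ℕ := Nat.find hex with hKdef
  have hcondK : ρ ≤ (1 + Λ) * 2 ^ (K + 1) := Nat.find_spec hex
  have hKle : ∀ k : ℕ, ρ ≤ (1 + Λ) * 2 ^ (k + 1) → K ≤ k := fun k hk => Nat.find_min' hex hk
  -- decompose along dyadic scales
  have hdecomp : ∑' j, g j = ∑' (k : ℕ) (j : Fin d → ℤ),
      (if k = Nat.log 2 (nsup j) then g j else 0) := by
    rw [ENNReal.tsum_comm]
    exact tsum_congr fun j => (tsum_ite_eq (Nat.log 2 (nsup j)) (fun _ => g j)).symm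
  rw [hdecomp]
  -- per-scale bound
  have hscale : ∀ k : ℕ, (∑' j : Fin d → ℤ, if k = Nat.log 2 (nsup j) then g j else 0)
      ≤ if ρ ≤ (1 + Λ) * 2 ^ (k + 1) then ENNReal.ofReal (D0 * r ^ k) else 0 := by
    intro k
    by_cases hck : ρ ≤ (1 + Λ) * 2 ^ (k + 1)
    · rw [if_pos hck]
      set N : ℤ := ((2 ^ (k + 1) : ℕ) : ℤ) - 1 with hNdef
      set FS : Finset (Fin d → ℤ) := Fintype.piFinset
        (fun i => if 0 ≤ m i then Finset.Icc 0 N else Finset.Icc (-N) 0) with hFSdef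
      set Ck : ℝ≥0∞ := ENNReal.ofReal (2 ^ p * ((ρ:ℕ):ℝ) ^ q * (((Λ:ℝ)) ^ d)⁻¹ *
        ((((2 ^ k : ℕ)):ℝ) ^ d)⁻¹ * r ^ k) with hCkdef
      have hcardFS : FS.card = (2 ^ (k + 1)) ^ d := by
        rw [hFSdef, Fintype.card_piFinset]
        have hci : ∀ i : Fin d,
            (if 0 ≤ m i then Finset.Icc (0:ℤ) N else Finset.Icc (-N) 0).card = 2 ^ (k + 1) := by
          intro i
          have h2 : (1:ℕ) ≤ 2 ^ (k + 1) := Nat.one_le_two_pow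
          by_cases h : 0 ≤ m i
          · rw [if_pos h, Int.card_Icc, hNdef]; omega
          · rw [if_neg h, Int.card_Icc, hNdef]; omega
        simp only [hci, Finset.prod_const, Finset.card_univ, Fintype.card_fin]
      -- pointwise domination
      have hpt : ∀ j : Fin d → ℤ, (if k = Nat.log 2 (nsup j) then g j else 0)
          ≤ if j ∈ FS then Ck else 0 := by
        intro j
        by_cases hkj : k = Nat.log 2 (nsup j)
        swap
        · rw [if_neg hkj]; exact zero_le
        rw [if_pos hkj, hgdef]
        by_cases hcj : j ≠ 0 ∧ m ∈ Qset Λ j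
        swap
        · simp only [if_neg hcj]; exact zero_le
        simp only [if_pos hcj]
        obtain ⟨hj0, hjQ⟩ := hcj
        obtain ⟨-, -, -, -, hρub, hsgn⟩ := Qset_spec hd hjQ
        have hR1 : 1 ≤ nsup j := one_le_nsup hj0
        have h2k : 2 ^ k ≤ nsup j := by
          rw [hkj]; exact Nat.pow_log_le_self 2 (by omega)
        have hlt : nsup j < 2 ^ (k + 1) := by
          rw [hkj]; exact Nat.lt_pow_succ_log_self (by norm_num) _
        -- membership
        have hmem : j ∈ FS := by
          rw [hFSdef, Fintype.mem_piFinset]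
          intro i
          have hai := le_nsup j i
          have hs1 := (hsgn i).1
          have hs2 := (hsgn i).2
          by_cases h : 0 ≤ m i
          · simp only [h, if_true, Finset.mem_Icc, hNdef]
            constructor
            · exact hs1 h
            · omega
          · simp only [h, if_false, Finset.mem_Icc, hNdef]
            push_neg at h
            constructor
            · omega
            · exact hs2 h
        rw [if_pos hmem, hCkdef]
        -- value bound
        apply ENNReal.ofReal_le_ofReal
        set R : ℕ := nsup j with hRdef
        have h2kpos : (0:ℝ) < ((2 ^ k : ℕ) : ℝ) := by positivity
        have hA : ((2 ^ k : ℕ) : ℝ) ≤ ((R:ℕ):ℝ) := by exact_mod_cast h2k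
        have hmono : (Λ:ℝ) ^ d * (((2 ^ k : ℕ):ℝ) ^ d * (((2 ^ k : ℕ)):ℝ) ^ q)
            ≤ (Λ:ℝ) ^ d * (((R:ℕ):ℝ) ^ d * ((R:ℕ):ℝ) ^ q) := by
          refine mul_le_mul_of_nonneg_left ?_ (by positivity)
          refine mul_le_mul (pow_le_pow_left₀ h2kpos.le hA d)
            (Real.rpow_le_rpow h2kpos.le hA hq.le) (by positivity) (by positivity)
        have hLcast : (((Λ * R : ℕ)):ℝ) ^ d = (Λ:ℝ) ^ d * ((R:ℕ):ℝ) ^ d := by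
          rw [Nat.cast_mul, mul_pow]
        calc 2 ^ p * ((ρ:ℕ):ℝ) ^ q * ((((Λ * R : ℕ)):ℝ) ^ d * ((R:ℕ):ℝ) ^ q)⁻¹
            = 2 ^ p * ((ρ:ℕ):ℝ) ^ q * ((Λ:ℝ) ^ d * (((R:ℕ):ℝ) ^ d * ((R:ℕ):ℝ) ^ q))⁻¹ := by
              rw [hLcast]; ring
          _ ≤ 2 ^ p * ((ρ:ℕ):ℝ) ^ q *
              ((Λ:ℝ) ^ d * ((((2 ^ k : ℕ)):ℝ) ^ d * (((2 ^ k : ℕ)):ℝ) ^ q))⁻¹ := by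
              refine mul_le_mul_of_nonneg_left (inv_anti₀ (by positivity) hmono)
                (by positivity)
          _ = 2 ^ p * ((ρ:ℕ):ℝ) ^ q * (((Λ:ℝ)) ^ d)⁻¹ * ((((2 ^ k : ℕ)):ℝ) ^ d)⁻¹ * r ^ k := by
              rw [hrdef]
              rw [show (((2 ^ k : ℕ)):ℝ) = (2:ℝ) ^ k by push_cast; ring]
              rw [← two_pow_q_inv q k]
              rw [mul_inv, mul_inv]
              ring
      -- sum the domination
      calc (∑' j : Fin d → ℤ, if k = Nat.log 2 (nsup j) then g j else 0)
          ≤ ∑' j : Fin d → ℤ, (if j ∈ FS then Ck else 0) := ENNReal.tsum_le_tsum hpt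
        _ = ∑ j ∈ FS, Ck := by
            rw [tsum_eq_sum (fun j hj => if_neg hj)]
            exact Finset.sum_congr rfl fun j hj => if_pos hj
        _ = (FS.card : ℝ≥0∞) * Ck := by
            rw [Finset.sum_const, nsmul_eq_mul]
        _ ≤ ENNReal.ofReal (D0 * r ^ k) := by
            rw [hcardFS, hCkdef]
            have hcast : (((2 ^ (k + 1)) ^ d : ℕ) : ℝ≥0∞)
                = ENNReal.ofReal ((((2 ^ (k + 1) : ℕ)) : ℝ) ^ d) := by
              rw [← Nat.cast_pow, ENNReal.ofReal_natCast, Nat.cast_pow]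
            rw [hcast, ← ENNReal.ofReal_mul (by positivity)]
            apply ENNReal.ofReal_le_ofReal
            rw [hD0def]
            have hido : (((2 ^ (k + 1) : ℕ)):ℝ) ^ d = 2 ^ d * (((2 ^ k : ℕ)):ℝ) ^ d := by
              push_cast
              rw [pow_succ, mul_comm ((2:ℝ)^k) 2, mul_pow]
            rw [hido]
            have h2kd : ((((2 ^ k : ℕ)):ℝ) ^ d) ≠ 0 := by positivity
            have : (2:ℝ) ^ d * (((2 ^ k : ℕ)):ℝ) ^ d *
                (2 ^ p * ((ρ:ℕ):ℝ) ^ q * (((Λ:ℝ)) ^ d)⁻¹ * ((((2 ^ k : ℕ)):ℝ) ^ d)⁻¹ * r ^ k)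
                = 2 ^ p * ((ρ:ℕ):ℝ) ^ q * ((2:ℝ) ^ d * (((Λ:ℝ)) ^ d)⁻¹) * r ^ k := by
              field_simp
            rw [this, div_pow, div_eq_mul_inv]
    · rw [if_neg hck]
      have hz : ∀ j : Fin d → ℤ, (if k = Nat.log 2 (nsup j) then g j else 0) = 0 := by
        intro j
        by_cases hkj : k = Nat.log 2 (nsup j)
        swap
        · rw [if_neg hkj]
        rw [if_pos hkj]
        simp only [hgdef]
        by_cases hcj : j ≠ 0 ∧ m ∈ Qset Λ j
        swap
        · rw [if_neg hcj]
        exfalso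
        obtain ⟨hj0, hjQ⟩ := hcj
        obtain ⟨-, -, -, -, hρub, -⟩ := Qset_spec hd hjQ
        have hlt : nsup j < 2 ^ (k + 1) := by
          rw [hkj]; exact Nat.lt_pow_succ_log_self (by norm_num) _
        exact hck (le_trans hρub (by exact Nat.mul_le_mul_left _ (by omega)))
      rw [tsum_congr hz]
      simp
  -- combine over k
  calc (∑' (k : ℕ) (j : Fin d → ℤ), (if k = Nat.log 2 (nsup j) then g j else 0))
      ≤ ∑' k : ℕ, (if ρ ≤ (1 + Λ) * 2 ^ (k + 1) then ENNReal.ofReal (D0 * r ^ k) else 0) :=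
        ENNReal.tsum_le_tsum hscale
    _ ≤ ∑' k : ℕ, (if K ≤ k then ENNReal.ofReal (D0 * r ^ k) else 0) := by
        refine ENNReal.tsum_le_tsum fun k => ?_
        by_cases hck : ρ ≤ (1 + Λ) * 2 ^ (k + 1)
        · rw [if_pos hck, if_pos (hKle k hck)]
        · rw [if_neg hck]; exact zero_le
    _ = ENNReal.ofReal (D0 * r ^ K * (1 - r)⁻¹) :=
        tsum_threshold_geom D0 r hD00 hr0.le hr1 K
    _ ≤ ENNReal.ofReal (2 ^ p * (2 * (1 + (Λ:ℝ))) ^ q * (1 - 2 ^ (-q))⁻¹ * ((2 / (Λ:ℝ))) ^ d) := by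
        apply ENNReal.ofReal_le_ofReal
        rw [hD0def, ← hrdef]
        -- key : ρ^q * r^K ≤ (2(1+Λ))^q
        have hcast : ((ρ:ℕ):ℝ) ≤ (2 * (1 + (Λ:ℝ))) * ((2 ^ K : ℕ) : ℝ) := by
          have : ((ρ:ℕ):ℝ) ≤ (((1 + Λ) * 2 ^ (K + 1) : ℕ) : ℝ) := by exact_mod_cast hcondK
          refine this.trans (le_of_eq ?_)
          push_cast
          ring
        have hkey : ((ρ:ℕ):ℝ) ^ q * r ^ K ≤ (2 * (1 + (Λ:ℝ))) ^ q := by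
          have h1 : ((ρ:ℕ):ℝ) ^ q ≤ (2 * (1 + (Λ:ℝ))) ^ q * (((2 ^ K : ℕ)):ℝ) ^ q := by
            rw [← Real.mul_rpow (by positivity) (by positivity)]
            exact Real.rpow_le_rpow (by positivity) hcast hq.le
          have h2 : (0:ℝ) ≤ r ^ K := by positivity
          calc ((ρ:ℕ):ℝ) ^ q * r ^ K
              ≤ ((2 * (1 + (Λ:ℝ))) ^ q * (((2 ^ K : ℕ)):ℝ) ^ q) * r ^ K :=
                mul_le_mul_of_nonneg_right h1 h2
            _ = (2 * (1 + (Λ:ℝ))) ^ q * ((((2 ^ K : ℕ)):ℝ) ^ q * r ^ K) := by ring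
            _ = (2 * (1 + (Λ:ℝ))) ^ q := by
                rw [hrdef, show (((2 ^ K : ℕ)):ℝ) = (2:ℝ) ^ K by push_cast; ring]
                rw [← two_pow_q_inv q K]
                rw [mul_inv_cancel₀ (by positivity)]
                rw [mul_one]
        have hnn : (0:ℝ) ≤ (1 - r)⁻¹ := by
          have : (0:ℝ) < 1 - r := by linarith
          positivity
        calc 2 ^ p * ((ρ:ℕ):ℝ) ^ q * (2 / (Λ:ℝ)) ^ d * r ^ K * (1 - r)⁻¹
            = (((ρ:ℕ):ℝ) ^ q * r ^ K) * (2 ^ p * (2 / (Λ:ℝ)) ^ d * (1 - r)⁻¹) := by ring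
          _ ≤ (2 * (1 + (Λ:ℝ))) ^ q * (2 ^ p * (2 / (Λ:ℝ)) ^ d * (1 - r)⁻¹) := by
              refine mul_le_mul_of_nonneg_right hkey (by positivity)
          _ = 2 ^ p * (2 * (1 + (Λ:ℝ))) ^ q * (1 - r)⁻¹ * ((2 / (Λ:ℝ))) ^ d := by ring

end FH

open FH

/-- Fractional discrete Hardy inequality on the full lattice `ℤ^d` for `sp < d`,
`d - sp ≥ δ > 0`, with a constant depending only on `s`, `p`, `δ`. -/
theorem frac_hardy_sp_small_Z (s p δ : ℝ) (hs : 0 < s) (hp : 0 < p) (hδ : 0 < δ) :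
    ∃ c : ℝ, 0 ≤ c ∧ ∀ (d : ℕ), s * p < d → δ ≤ (d : ℝ) - s * p →
      ∀ u : (Fin d → ℤ) → ℂ,
      (∑' (j : {j : Fin d → ℤ // j ≠ 0}),
          ENNReal.ofReal (‖u j.1‖ ^ p / zsup j.1 ^ (s * p))) ≠ ⊤ →
      (∑' (j : {j : Fin d → ℤ // j ≠ 0}),
          ENNReal.ofReal (‖u j.1‖ ^ p / zsup j.1 ^ (s * p)))
        ≤ ENNReal.ofReal c *
            ∑' (j : {j : Fin d → ℤ // j ≠ 0})
              (m : {m : Fin d → ℤ // m ≠ 0 ∧ m ≠ j.1}),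
              ENNReal.ofReal
                (‖u j.1 - u m.1‖ ^ p / zsup (j.1 - m.1) ^ (s * p + d)) := by
  classical
  have hq : 0 < s * p := mul_pos hs hp
  obtain ⟨Λ, hΛ4, hΛ⟩ := exists_Lambda s p δ hs hp hδ
  have hΛ1 : 1 ≤ Λ := by omega
  refine ⟨2 ^ (p + 1) * (Λ:ℝ) ^ (s * p), by positivity, ?_⟩
  intro d hspd hδd u hfin
  have hd : 0 < d := by
    have h0 : (0:ℝ) < (d:ℕ) := lt_trans hq hspd
    exact_mod_cast h0
  set q : ℝ := s * p with hqdef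
  -- abbreviations
  set A : (Fin d → ℤ) → ℝ≥0∞ := fun j =>
    ENNReal.ofReal (‖u j‖ ^ p / zsup j ^ q) with hAdef
  set A0 : (Fin d → ℤ) → ℝ≥0∞ := fun j => if j = 0 then 0 else A j with hA0def
  set Tj : (Fin d → ℤ) → ℝ≥0∞ := fun j =>
    ∑' (m : {m : Fin d → ℤ // m ≠ 0 ∧ m ≠ j}),
      ENNReal.ofReal (‖u j - u m.1‖ ^ p / zsup (j - m.1) ^ (q + d)) with hTjdef
  set T0 : (Fin d → ℤ) → ℝ≥0∞ := fun j => if j = 0 then 0 else Tj j with hT0def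
  set EQ : (Fin d → ℤ) → ℝ≥0∞ := fun j => ∑ m ∈ Qset Λ j, ENNReal.ofReal
      (2 ^ p * ‖u m‖ ^ p /
        (((Λ * nsup j : ℕ) : ℝ) ^ d * ((nsup j : ℕ) : ℝ) ^ q)) with hEQdef
  -- identify the subtype sums with full-lattice sums
  have hS : (∑' (j : {j : Fin d → ℤ // j ≠ 0}),
      ENNReal.ofReal (‖u j.1‖ ^ p / zsup j.1 ^ q)) = ∑' j, A0 j := by
    have h0 := tsum_subtype {j : Fin d → ℤ | j ≠ 0}
      (fun j => ENNReal.ofReal (‖u j‖ ^ p / zsup j ^ q))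
    refine h0.trans (tsum_congr fun j => ?_)
    by_cases h : j = 0 <;> simp [hA0def, hAdef, Set.indicator, Set.mem_setOf_eq, h]
  have hT : (∑' (j : {j : Fin d → ℤ // j ≠ 0})
        (m : {m : Fin d → ℤ // m ≠ 0 ∧ m ≠ j.1}),
        ENNReal.ofReal (‖u j.1 - u m.1‖ ^ p / zsup (j.1 - m.1) ^ (q + d)))
      = ∑' j, T0 j := by
    have h0 := tsum_subtype {j : Fin d → ℤ | j ≠ 0} (fun j => Tj j)
    refine h0.trans (tsum_congr fun j => ?_)
    by_cases h : j = 0 <;> simp [hT0def, Set.indicator, Set.mem_setOf_eq, h]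
  rw [hS, hT]
  -- step 1 : averaging
  have hstep1 : ∑' j, A0 j ≤ ENNReal.ofReal (2 ^ p * (Λ:ℝ) ^ q) * (∑' j, T0 j)
      + ∑' j, (if j = 0 then 0 else EQ j) := by
    rw [← ENNReal.tsum_mul_left, ← ENNReal.tsum_add]
    refine ENNReal.tsum_le_tsum fun j => ?_
    by_cases h : j = 0
    · simp [hA0def, hT0def, h]
    · rw [hA0def, hT0def]
      simp only [if_neg h]
      exact averaging p q hp hq Λ hΛ1 hd u j h
  -- step 2 : absorption of the second sum
  set wgt : (Fin d → ℤ) → (Fin d → ℤ) → ℝ≥0∞ := fun j m =>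
    ENNReal.ofReal (2 ^ p * ((nsup m : ℕ) : ℝ) ^ q *
      ((((Λ * nsup j : ℕ)) : ℝ) ^ d * ((nsup j : ℕ) : ℝ) ^ q)⁻¹) with hwgtdef
  set e : (Fin d → ℤ) → (Fin d → ℤ) → ℝ≥0∞ := fun j m =>
    if j ≠ 0 ∧ m ∈ Qset Λ j then A m * wgt j m else 0 with hedef
  have hE : ∀ j, (if j = 0 then 0 else EQ j) = ∑' m, e j m := by
    intro j
    by_cases h : j = 0
    · rw [if_pos h]
      have hz : ∀ m, e j m = 0 := by
        intro m
        simp only [hedef]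
        rw [if_neg]
        rintro ⟨hj0, -⟩
        exact hj0 h
      rw [tsum_congr hz, tsum_zero]
    · rw [if_neg h, hEQdef]
      simp only
      symm
      rw [tsum_eq_sum (s := Qset Λ j) (fun m hm => by
        simp only [hedef]
        rw [if_neg (fun hc => hm hc.2)])]
      refine Finset.sum_congr rfl fun m hm => ?_
      obtain ⟨hm0, -, -, -, -, -⟩ := Qset_spec hd hm
      simp only [hedef, hAdef, hwgtdef]
      rw [if_pos ⟨h, hm⟩]
      rw [← ENNReal.ofReal_mul (div_nonneg (Real.rpow_nonneg (norm_nonneg _) p)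
        (Real.rpow_nonneg (by rw [zsup_eq]; positivity) q))]
      congr 1
      have hρ1 : (1:ℕ) ≤ nsup m := one_le_nsup hm0
      have hρpos : (0:ℝ) < ((nsup m : ℕ):ℝ) ^ q :=
        Real.rpow_pos_of_pos (by exact_mod_cast hρ1) q
      have hR1 : (1:ℕ) ≤ nsup j := one_le_nsup h
      have hRpos : (0:ℝ) < ((nsup j : ℕ):ℝ) ^ q :=
        Real.rpow_pos_of_pos (by exact_mod_cast hR1) q
      have hLpos : (0:ℝ) < (((Λ * nsup j : ℕ)):ℝ) ^ d := by
        have : (1:ℕ) ≤ Λ * nsup j := by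
          have := Nat.mul_le_mul hΛ1 hR1
          omega
        have h2 : (0:ℝ) < (((Λ * nsup j : ℕ)):ℝ) := by exact_mod_cast this
        positivity
      rw [zsup_eq]
      field_simp
  have hstep2 : (∑' j, (if j = 0 then 0 else EQ j))
      ≤ ENNReal.ofReal (1/2) * ∑' j, A0 j := by
    calc (∑' j, (if j = 0 then 0 else EQ j)) = ∑' j, ∑' m, e j m := tsum_congr hE
      _ = ∑' m, ∑' j, e j m := ENNReal.tsum_comm
      _ ≤ ∑' m, ENNReal.ofReal (1/2) * A0 m := by
          refine ENNReal.tsum_le_tsum fun m => ?_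
          by_cases hm : m = 0
          · have hz : ∀ j, e j m = 0 := by
              intro j
              simp only [hedef]
              rw [if_neg]
              rintro ⟨-, hjQ⟩
              exact (Qset_spec hd hjQ).1 hm
            rw [tsum_congr hz, tsum_zero]
            exact zero_le
          · have hsplit : ∀ j, e j m
                = A m * (if j ≠ 0 ∧ m ∈ Qset Λ j then wgt j m else 0) := by
              intro j
              simp only [hedef]
              by_cases hc : j ≠ 0 ∧ m ∈ Qset Λ j
              · rw [if_pos hc, if_pos hc]
              · rw [if_neg hc, if_neg hc, mul_zero]
            calc ∑' j, e j m
                = A m * ∑' j, (if j ≠ 0 ∧ m ∈ Qset Λ j then wgt j m else 0) := by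
                  rw [tsum_congr hsplit, ENNReal.tsum_mul_left]
              _ ≤ A m * ENNReal.ofReal (1/2) := by
                  refine mul_le_mul_right ?_ (A m)
                  refine le_trans (le_of_eq (tsum_congr fun j => by rw [hwgtdef])) ?_
                  refine (counting p q hp hq Λ hΛ1 hd u m hm).trans ?_
                  exact ENNReal.ofReal_le_ofReal (hΛ d hd (by linarith))
              _ = ENNReal.ofReal (1/2) * A0 m := by
                  rw [hA0def]
                  simp only [if_neg hm]
                  ring
      _ = ENNReal.ofReal (1/2) * ∑' m, A0 m := ENNReal.tsum_mul_left
  -- combine and cancel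
  have hhalf : ENNReal.ofReal (1/2 : ℝ) = 1/2 := by
    rw [ENNReal.ofReal_div_of_pos (by norm_num), ENNReal.ofReal_one, ENNReal.ofReal_ofNat]
  have hfin' : (∑' j, A0 j) ≠ ⊤ := by rw [← hS]; exact hfin
  have hmain : (∑' j, A0 j) ≤ ENNReal.ofReal (2 ^ p * (Λ:ℝ) ^ q) * (∑' j, T0 j)
      + (∑' j, A0 j) / 2 := by
    refine hstep1.trans ?_
    refine add_le_add_right ?_ _
    refine hstep2.trans (le_of_eq ?_)
    rw [hhalf, one_div, div_eq_mul_inv, mul_comm]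
  have hS2top : (∑' j, A0 j) / 2 ≠ ⊤ :=
    (ENNReal.div_lt_top hfin' (by norm_num)).ne
  have h2 : (∑' j, A0 j) / 2 + (∑' j, A0 j) / 2
      ≤ ENNReal.ofReal (2 ^ p * (Λ:ℝ) ^ q) * (∑' j, T0 j) + (∑' j, A0 j) / 2 := by
    rw [ENNReal.add_halves]
    exact hmain
  have h3 : (∑' j, A0 j) / 2 ≤ ENNReal.ofReal (2 ^ p * (Λ:ℝ) ^ q) * (∑' j, T0 j) :=
    (ENNReal.add_le_add_iff_right hS2top).mp h2
  calc (∑' j, A0 j) = (∑' j, A0 j) / 2 + (∑' j, A0 j) / 2 := (ENNReal.add_halves _).symm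
    _ ≤ ENNReal.ofReal (2 ^ p * (Λ:ℝ) ^ q) * (∑' j, T0 j)
        + ENNReal.ofReal (2 ^ p * (Λ:ℝ) ^ q) * (∑' j, T0 j) := add_le_add h3 h3
    _ = (2 : ℝ≥0∞) * (ENNReal.ofReal (2 ^ p * (Λ:ℝ) ^ q) * (∑' j, T0 j)) := by
        rw [two_mul]
    _ = ENNReal.ofReal (2 ^ (p + 1) * (Λ:ℝ) ^ q) * (∑' j, T0 j) := by
        rw [← mul_assoc]
        congr 1
        rw [show (2 : ℝ≥0∞) = ENNReal.ofReal 2 by rw [ENNReal.ofReal_ofNat],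
          ← ENNReal.ofReal_mul (by norm_num)]
        congr 1
        rw [Real.rpow_add (by norm_num : (0:ℝ) < 2) p 1, Real.rpow_one]
        ring
end
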